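/- arXiv:1308.6717 — 3 statements merged into one kernel-verified Lean document; each statement's English description precedes it below -/
import Mathlib

section
/- For every admissible subgroup L of ℤ × ℤ, the elongated-triangular torus graph G(L) has a contractible Hamiltonian cycle: there is a cycle C̃ in the infinite elongated-triangular graph G∞ such that the projection π (reduction of the first coordinate modulo L) maps C̃ isomorphically onto a Hamiltonian cycle of G(L). -/
/-- `e₁ = (1,0)` in `ℤ × ℤ`. -/
def e₁ : ℤ × ℤ := (1, 0)

/-- `e₂ = (0,1)` in `ℤ × ℤ`. -/
def e₂ : ℤ × ℤ := (0, 1)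

/-- A subgroup `L ≤ ℤ × ℤ` is admissible if it has finite index and contains no nonzero
vector `(v₁, v₂)` with `|v₁| ≤ 2` and `|v₂| ≤ 2`. -/
def Admissible (L : AddSubgroup (ℤ × ℤ)) : Prop :=
  Finite ((ℤ × ℤ) ⧸ L) ∧ ∀ v ∈ L, v ≠ 0 → ¬(|v.1| ≤ 2 ∧ |v.2| ≤ 2)

/-- A graph is Hamiltonian if it contains a cycle visiting every vertex (exactly once:
a cycle repeats no vertex other than its basepoint). -/
def SimpleGraph.Hamiltonian {α : Type*} (G : SimpleGraph α) : Prop :=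
  ∃ (a : α) (p : G.Walk a a), p.IsCycle ∧ ∀ v, v ∈ p.support

/-- The edge relation of the elongated-triangular graph over an abelian group `A`,
with translation vectors `E₁, E₂`. -/
def elongatedTriRel {A : Type*} [AddCommGroup A] (E₁ E₂ : A) :
    A × Fin 2 → A × Fin 2 → Prop := fun u v =>
  (∃ x : A, u = (x, 0) ∧ v = (x + E₁, 0)) ∨
  (∃ x : A, u = (x, 1) ∧ v = (x + E₁, 1)) ∨
  (∃ x : A, u = (x, 0) ∧ v = (x, 1)) ∨
  (∃ x : A, u = (x, 1) ∧ v = (x + E₂, 0)) ∨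
  (∃ x : A, u = (x, 1) ∧ v = (x + E₁ + E₂, 0))

/-- The elongated-triangular graph over an abelian group `A`. -/
def elongatedTriGraph {A : Type*} [AddCommGroup A] (E₁ E₂ : A) : SimpleGraph (A × Fin 2) :=
  SimpleGraph.fromRel (elongatedTriRel E₁ E₂)

/-- The elongated-triangular torus graph `G(L)`, the edge graph of the semi-equivelar
map of type `{3³,4²}` on the torus determined by `L`. -/
def elongatedTriTorusGraph (L : AddSubgroup (ℤ × ℤ)) :
    SimpleGraph (((ℤ × ℤ) ⧸ L) × Fin 2) :=
  elongatedTriGraph (QuotientAddGroup.mk e₁) (QuotientAddGroup.mk e₂)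

/-- The infinite elongated-triangular graph `G∞` on `(ℤ × ℤ) × {0,1}`. -/
def elongatedTriInfGraph : SimpleGraph ((ℤ × ℤ) × Fin 2) := elongatedTriGraph e₁ e₂


open SimpleGraph List

theorem chain_cons_iff' {α : Type*} {R : α → α → Prop} {a b : α} {l : List α} :
    List.Chain R a (b :: l) ↔ R a b ∧ List.Chain R b l := List.isChain_cons_cons

theorem chain_iff_isChain' {α : Type*} {R : α → α → Prop} {a : α} {l : List α} :
    List.Chain R a l ↔ List.IsChain R (a :: l) := Iff.rfl

variable {V : Type*} {G : SimpleGraph V}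

def buildWalk (G : SimpleGraph V) : (a b : V) → (l : List V) → List.Chain G.Adj a (l ++ [b]) → G.Walk a b
  | a, b, [], h => Walk.cons (List.isChain_pair.mp h) Walk.nil
  | a, b, c :: l, h => Walk.cons (chain_cons_iff'.mp h).1 (buildWalk G c b l (chain_cons_iff'.mp h).2)

theorem buildWalk_support (G : SimpleGraph V) :
    ∀ (a b : V) (l : List V) (h : List.Chain G.Adj a (l ++ [b])),
      (buildWalk G a b l h).support = a :: (l ++ [b])
  | a, b, [], h => by simp [buildWalk]
  | a, b, c :: l, h => by simp [buildWalk, buildWalk_support G c b l]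

theorem buildWalk_edge_end (G : SimpleGraph V) :
    ∀ (a b : V) (l : List V) (h : List.Chain G.Adj a (l ++ [b])) (v : V),
      s(v, b) ∈ (buildWalk G a b l h).edges → b ∉ (a :: l) →
      v = (a :: l).getLast (List.cons_ne_nil a l)
  | a, b, [], h, v => by
    intro hmem hnot
    simp [buildWalk] at hmem
    rcases hmem with ⟨rfl, rfl⟩ | ⟨rfl, rfl⟩
    · simp
    · simp at hnot
  | a, b, c :: l, h, v => by
    intro hmem hnot
    simp only [buildWalk, Walk.edges_cons, List.mem_cons] at hmem
    rcases hmem with heq | hmem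
    · rw [Sym2.eq_iff] at heq
      rcases heq with ⟨rfl, rfl⟩ | ⟨rfl, rfl⟩
      · exact absurd (by simp) hnot
      · exact absurd (by simp) hnot
    · have := buildWalk_edge_end G c b l (chain_cons_iff'.mp h).2 v hmem
        (fun hc => hnot (List.mem_cons_of_mem _ hc))
      rw [this]
      simp [List.getLast_cons]

theorem buildWalk_isCycle (G : SimpleGraph V) (a : V) (l : List V)
    (h : List.Chain G.Adj a (l ++ [a])) (hnd : (a :: l).Nodup) (hlen : 2 ≤ l.length) :
    (buildWalk G a a l h).IsCycle := by
  match l, h with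
  | c :: l, h =>
    rw [buildWalk]
    have hnd' : (c :: (l ++ [a])).Nodup := by
      have : (c :: (l ++ [a])) = (c :: l) ++ [a] := rfl
      rw [this, List.nodup_append]
      refine ⟨(List.nodup_cons.mp hnd).2, List.nodup_singleton a, ?_⟩
      intro x hx y hy hxy
      simp only [List.mem_singleton] at hy
      subst hy hxy
      exact (List.nodup_cons.mp hnd).1 hx
    have hpath : (buildWalk G c a l (chain_cons_iff'.mp h).2).IsPath := by
      apply Walk.IsPath.mk'
      rw [buildWalk_support]
      exact hnd'
    rw [Walk.cons_isCycle_iff]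
    refine ⟨hpath, ?_⟩
    intro hmem
    rw [Sym2.eq_swap] at hmem
    have hanotin : a ∉ (c :: l) := (List.nodup_cons.mp hnd).1
    have := buildWalk_edge_end G c a l (chain_cons_iff'.mp h).2 c hmem hanotin
    -- c = getLast (c :: l); but l ≠ [] and c ∉ l
    match l, hlen with
    | d :: l, _ =>
      rw [List.getLast_cons (List.cons_ne_nil d l)] at this
      have hcm : c ∈ d :: l := this ▸ List.getLast_mem (List.cons_ne_nil d l)
      have hcnd : (c :: d :: l).Nodup := (List.nodup_cons.mp hnd).2
      exact (List.nodup_cons.mp hcnd).1 hcm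

theorem buildWalk_map {W : Type*} {G' : SimpleGraph W} (φ : G →g G') :
    ∀ (a b : V) (l : List V) (h : List.Chain G.Adj a (l ++ [b])),
      (buildWalk G a b l h).map φ =
        buildWalk G' (φ a) (φ b) (l.map φ)
          (by
            have := List.isChain_map_of_isChain (S := G'.Adj) (φ : V → W)
              (fun x y hxy => φ.map_adj hxy) (chain_iff_isChain'.mp h)
            exact chain_iff_isChain'.mpr (by simpa using this))
  | a, b, [], h => by simp [buildWalk, Walk.map]
  | a, b, c :: l, h => by
    simp only [buildWalk, Walk.map_cons]
    congr 1
    exact buildWalk_map φ c b l (chain_cons_iff'.mp h).2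

theorem chain_of_fn (R : V → V → Prop) (f : ℕ → V) :
    ∀ (k a : ℕ), (∀ t, a ≤ t → t + 1 ≤ a + k → R (f t) (f (t + 1))) →
      List.Chain R (f a) ((List.range k).map (fun i => f (a + 1 + i)))
  | 0, a, _ => by simp [List.Chain]
  | k + 1, a, h => by
    rw [List.range_succ_eq_map, List.map_cons, List.map_map]
    refine chain_cons_iff'.mpr ⟨by simpa using h a le_rfl (by omega), ?_⟩
    have := chain_of_fn R f k (a + 1) (fun t ht ht' => h t (by omega) (by omega))
    convert this using 2 with i
    funext i
    simp only [Function.comp_apply]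
    congr 1
    omega

theorem chain_cycle (R : V → V → Prop) (f : ℕ → V) (N : ℕ) (hN : 1 ≤ N)
    (h : ∀ t, t + 1 < N → R (f t) (f (t + 1))) (hcl : R (f (N - 1)) (f 0)) :
    List.Chain R (f 0) (((List.range (N - 1)).map (fun i => f (1 + i))) ++ [f 0]) := by
  set F : ℕ → V := fun t => if t < N then f t else f 0 with hF
  have key := chain_of_fn R F N 0 (fun t ht ht' => by
    by_cases hc : t + 1 < N
    · simpa [hF, hc, lt_trans (Nat.lt_succ_self t) hc] using h t hc
    · have ht1 : t + 1 = N := by omega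
      have : t = N - 1 := by omega
      subst this
      simpa [hF, show N - 1 < N by omega, show ¬ (N - 1 + 1 < N) by omega, ht1] using hcl)
  have hF0 : F 0 = f 0 := by simp [hF, hN]
  rw [hF0] at key
  have hlist : (List.range N).map (fun i => F (0 + 1 + i)) =
      ((List.range (N - 1)).map (fun i => f (1 + i))) ++ [f 0] := by
    conv_lhs => rw [show N = (N - 1) + 1 by omega]
    rw [List.range_succ, List.map_append]
    congr 1
    · apply List.map_congr_left
      intro i hi
      rw [List.mem_range] at hi
      simp only [hF, Nat.zero_add]
      rw [if_pos (by omega)]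
    · simp only [List.map_singleton, hF]
      rw [if_neg (by omega)]
  rwa [hlist] at key

theorem cons_map_range (f : ℕ → V) (N : ℕ) (hN : 1 ≤ N) :
    f 0 :: (List.range (N - 1)).map (fun i => f (1 + i)) = (List.range N).map f := by
  conv_rhs => rw [show N = (N - 1) + 1 by omega]
  rw [List.range_succ_eq_map, List.map_cons, List.map_map]
  congr 1
  apply List.map_congr_left
  intro i _
  simp [Nat.succ_eq_add_one, Nat.add_comm]

namespace SnakeAux

lemma adj_h0 (x y : ℤ) : elongatedTriInfGraph.Adj ((x, y), 0) ((x + 1, y), 0) := by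
  rw [elongatedTriInfGraph, elongatedTriGraph, SimpleGraph.fromRel_adj]
  refine ⟨by simp, Or.inl (Or.inl ⟨(x, y), rfl, by simp [e₁, Prod.ext_iff]⟩)⟩

lemma adj_h1 (x y : ℤ) : elongatedTriInfGraph.Adj ((x, y), 1) ((x + 1, y), 1) := by
  rw [elongatedTriInfGraph, elongatedTriGraph, SimpleGraph.fromRel_adj]
  refine ⟨by simp, Or.inl (Or.inr (Or.inl ⟨(x, y), rfl, by simp [e₁, Prod.ext_iff]⟩))⟩

lemma adj_v (x y : ℤ) : elongatedTriInfGraph.Adj ((x, y), 0) ((x, y), 1) := by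
  rw [elongatedTriInfGraph, elongatedTriGraph, SimpleGraph.fromRel_adj]
  refine ⟨by simp, Or.inl (Or.inr (Or.inr (Or.inl ⟨(x, y), rfl, rfl⟩)))⟩

lemma adj_d (x y : ℤ) : elongatedTriInfGraph.Adj ((x, y), 1) ((x, y + 1), 0) := by
  rw [elongatedTriInfGraph, elongatedTriGraph, SimpleGraph.fromRel_adj]
  refine ⟨by simp, Or.inl (Or.inr (Or.inr (Or.inr (Or.inl
    ⟨(x, y), rfl, by simp [e₂, Prod.ext_iff]⟩))))⟩

end SnakeAux

namespace SnakeAux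

def snakeF (m s : ℕ) (t : ℕ) : (ℤ × ℤ) × Fin 2 :=
  if t < m then (((t : ℤ), 0), 0)
  else if t = m then (((m : ℤ) - 1, 0), 1)
  else if t < m + 1 + 2 * (s - 1) then
    (((m : ℤ) - 1, ((t - (m + 1)) / 2 : ℕ) + 1),
      if (t - (m + 1)) % 2 = 0 then 0 else 1)
  else if t < m + 1 + 2 * (s - 1) + (s - 1) * (2 * (m - 1)) then
    (if (t - (m + 1 + 2 * (s - 1))) % (2 * (m - 1)) < m - 1 then
      (((m : ℤ) - 2 - ((t - (m + 1 + 2 * (s - 1))) % (2 * (m - 1)) : ℕ),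
        (s : ℤ) - 1 - ((t - (m + 1 + 2 * (s - 1))) / (2 * (m - 1)) : ℕ)), 1)
    else
      ((((t - (m + 1 + 2 * (s - 1))) % (2 * (m - 1)) : ℕ) - ((m : ℤ) - 1),
        (s : ℤ) - 1 - ((t - (m + 1 + 2 * (s - 1))) / (2 * (m - 1)) : ℕ)), 0))
  else (((m : ℤ) - 2 - ((t - (m + 1 + 2 * (s - 1) + (s - 1) * (2 * (m - 1)))) : ℕ), 0), 1)

variable {m s : ℕ}

lemma f_A {t : ℕ} (h : t < m) : snakeF m s t = (((t : ℤ), 0), 0) := by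
  rw [snakeF, if_pos h]

lemma f_B0 (hm : 1 ≤ m) : snakeF m s m = (((m : ℤ) - 1, 0), 1) := by
  rw [snakeF, if_neg (by omega), if_pos rfl]

lemma f_climb {u : ℕ} (h : u < 2 * (s - 1)) :
    snakeF m s (m + 1 + u) =
      (((m : ℤ) - 1, ((u / 2 : ℕ) : ℤ) + 1), if u % 2 = 0 then (0 : Fin 2) else 1) := by
  rw [snakeF, if_neg (by omega), if_neg (by omega), if_pos (by omega)]
  have : m + 1 + u - (m + 1) = u := by omega
  rw [this]

lemma f_desc {b w : ℕ} (hm : 1 ≤ m) (hb : b < s - 1) (hw : w < 2 * (m - 1)) :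
    snakeF m s (m + 1 + 2 * (s - 1) + (b * (2 * (m - 1)) + w)) =
      if w < m - 1 then (((m : ℤ) - 2 - (w : ℤ), (s : ℤ) - 1 - (b : ℤ)), (1 : Fin 2))
      else (((w : ℤ) - ((m : ℤ) - 1), (s : ℤ) - 1 - (b : ℤ)), (0 : Fin 2)) := by
  have hR : 0 < 2 * (m - 1) := by omega
  have hlt : b * (2 * (m - 1)) + w < (s - 1) * (2 * (m - 1)) := by
    have h1 : b + 1 ≤ s - 1 := by omega
    calc b * (2 * (m - 1)) + w < (b + 1) * (2 * (m - 1)) := by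
          rw [add_mul, one_mul]; omega
    _ ≤ (s - 1) * (2 * (m - 1)) := Nat.mul_le_mul_right _ h1
  have hsub : m + 1 + 2 * (s - 1) + (b * (2 * (m - 1)) + w) - (m + 1 + 2 * (s - 1))
      = b * (2 * (m - 1)) + w := by omega
  have hdiv : (b * (2 * (m - 1)) + w) / (2 * (m - 1)) = b := by
    rw [Nat.mul_comm b, Nat.mul_add_div hR, Nat.div_eq_of_lt hw, Nat.add_zero]
  have hmod : (b * (2 * (m - 1)) + w) % (2 * (m - 1)) = w := by
    rw [Nat.mul_comm b, Nat.mul_add_mod, Nat.mod_eq_of_lt hw]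
  rw [snakeF, if_neg (by omega), if_neg (by omega), if_neg (by omega), if_pos (by omega),
    hsub, hdiv, hmod]

lemma f_Blane {v : ℕ} (hm : 1 ≤ m) (hv : v < m - 1) :
    snakeF m s (m + 1 + 2 * (s - 1) + (s - 1) * (2 * (m - 1)) + v) =
      (((m : ℤ) - 2 - (v : ℤ), 0), 1) := by
  rw [snakeF, if_neg (by omega), if_neg (by omega), if_neg (by omega), if_neg (by omega)]
  have : m + 1 + 2 * (s - 1) + (s - 1) * (2 * (m - 1)) + v
      - (m + 1 + 2 * (s - 1) + (s - 1) * (2 * (m - 1))) = v := by omega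
  rw [this]

end SnakeAux

namespace SnakeAux

def snakeG (m s : ℕ) (v : (ℤ × ℤ) × Fin 2) : ℕ :=
  if v.1.2 = 0 then
    (if v.2 = 0 then v.1.1.toNat
     else if v.1.1 = (m : ℤ) - 1 then m
     else 2 * m * s - 1 - v.1.1.toNat)
  else if v.1.1 = (m : ℤ) - 1 then
    m + 1 + 2 * (v.1.2.toNat - 1) + (if v.2 = 0 then 0 else 1)
  else
    m + 1 + 2 * (s - 1) + ((s - 1) - v.1.2.toNat) * (2 * (m - 1))
      + (if v.2 = 1 then (m - 2) - v.1.1.toNat else (m - 1) + v.1.1.toNat)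

variable {m s : ℕ}

lemma total_eq (hm : 3 ≤ m) (hs : 1 ≤ s) :
    m + 1 + 2 * (s - 1) + (s - 1) * (2 * (m - 1)) + (m - 1) = 2 * m * s := by
  obtain ⟨s', rfl⟩ : ∃ s', s = s' + 1 := ⟨s - 1, by omega⟩
  obtain ⟨m', rfl⟩ : ∃ m', m = m' + 1 := ⟨m - 1, by omega⟩
  simp only [Nat.add_sub_cancel]
  ring

lemma region_split (hm : 3 ≤ m) (hs : 1 ≤ s) {t : ℕ} (ht : t < 2 * m * s) :
    t < m ∨ t = m ∨ (∃ u, u < 2 * (s - 1) ∧ t = m + 1 + u) ∨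
    (∃ b w, b < s - 1 ∧ w < 2 * (m - 1) ∧
      t = m + 1 + 2 * (s - 1) + (b * (2 * (m - 1)) + w)) ∨
    (∃ v, v < m - 1 ∧ t = m + 1 + 2 * (s - 1) + (s - 1) * (2 * (m - 1)) + v) := by
  have hN := total_eq hm hs
  by_cases h1 : t < m
  · exact Or.inl h1
  by_cases h2 : t = m
  · exact Or.inr (Or.inl h2)
  by_cases h3 : t < m + 1 + 2 * (s - 1)
  · exact Or.inr (Or.inr (Or.inl ⟨t - (m + 1), by omega, by omega⟩))
  by_cases h4 : t < m + 1 + 2 * (s - 1) + (s - 1) * (2 * (m - 1))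
  · set u := t - (m + 1 + 2 * (s - 1)) with hu
    have hR : 0 < 2 * (m - 1) := by omega
    refine Or.inr (Or.inr (Or.inr (Or.inl
      ⟨u / (2 * (m - 1)), u % (2 * (m - 1)), ?_, Nat.mod_lt _ hR, ?_⟩)))
    · rw [Nat.div_lt_iff_lt_mul hR]
      calc u < (s - 1) * (2 * (m - 1)) := by omega
        _ = _ := by ring
    · have h5 := Nat.div_add_mod u (2 * (m - 1))
      have h6 := Nat.mod_add_div' u (2 * (m - 1))
      omega
  · exact Or.inr (Or.inr (Or.inr (Or.inr ⟨t - (m + 1 + 2 * (s - 1) + (s - 1) * (2 * (m - 1))),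
      by omega, by omega⟩)))

lemma snake_gf (hm : 3 ≤ m) (hs : 1 ≤ s) {t : ℕ} (ht : t < 2 * m * s) :
    snakeG m s (snakeF m s t) = t := by
  have hN := total_eq hm hs
  have f10 : ((1 : Fin 2) = 0) = False := by simp
  have f00 : ((0 : Fin 2) = 0) = True := by simp
  have f11 : ((1 : Fin 2) = 1) = True := by simp
  have f01 : ((0 : Fin 2) = 1) = False := by simp
  rcases region_split hm hs ht with h | h | ⟨u, hu, rfl⟩ | ⟨b, w, hb, hw, rfl⟩ | ⟨v, hv, rfl⟩
  · rw [f_A h, snakeG]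
    dsimp only
    rw [if_pos rfl, if_pos rfl]
    omega
  · subst h
    rw [f_B0 (by omega), snakeG]
    dsimp only
    rw [if_pos rfl, if_neg (by rw [f10]; exact not_false), if_pos rfl]
  · rw [f_climb hu, snakeG]
    dsimp only
    rw [if_neg (by omega), if_pos rfl]
    by_cases hpar : u % 2 = 0
    · rw [if_pos hpar, if_pos rfl]
      have : ((u / 2 : ℕ) : ℤ).toNat = u / 2 := by omega
      push_cast
      omega
    · rw [if_neg hpar, if_neg (by rw [f10]; exact not_false)]
      push_cast
      omega
  · rw [f_desc (by omega) hb hw, snakeG]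
    by_cases hw1 : w < m - 1
    · rw [if_pos hw1]
      dsimp only
      rw [if_neg (by omega), if_neg (by omega), if_pos rfl]
      have h1 : ((s : ℤ) - 1 - (b : ℤ)).toNat = s - 1 - b := by omega
      have h2 : ((m : ℤ) - 2 - (w : ℤ)).toNat = m - 2 - w := by omega
      rw [h1, h2]
      have h3 : s - 1 - (s - 1 - b) = b := by omega
      have h4 : m - 2 - (m - 2 - w) = w := by omega
      rw [h3, h4]
      omega
    · rw [if_neg hw1]
      dsimp only
      rw [if_neg (by omega), if_neg (by omega), if_neg (by rw [f01]; exact not_false)]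
      have h1 : ((s : ℤ) - 1 - (b : ℤ)).toNat = s - 1 - b := by omega
      have h2 : ((w : ℤ) - ((m : ℤ) - 1)).toNat = w - (m - 1) := by omega
      rw [h1, h2]
      have h3 : s - 1 - (s - 1 - b) = b := by omega
      rw [h3]
      omega
  · rw [f_Blane (by omega) hv, snakeG]
    dsimp only
    rw [if_pos rfl, if_neg (by rw [f10]; exact not_false), if_neg (by omega)]
    have h2 : ((m : ℤ) - 2 - (v : ℤ)).toNat = m - 2 - v := by omega
    rw [h2]
    omega

lemma snake_mem (hm : 3 ≤ m) (hs : 1 ≤ s) {t : ℕ} (ht : t < 2 * m * s) :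
    0 ≤ (snakeF m s t).1.1 ∧ (snakeF m s t).1.1 < m ∧
    0 ≤ (snakeF m s t).1.2 ∧ (snakeF m s t).1.2 < s := by
  have hN := total_eq hm hs
  rcases region_split hm hs ht with h | h | ⟨u, hu, rfl⟩ | ⟨b, w, hb, hw, rfl⟩ | ⟨v, hv, rfl⟩
  · rw [f_A h]
    refine ⟨by dsimp only [Prod.fst, Prod.snd]; omega, by dsimp only [Prod.fst, Prod.snd]; omega, by dsimp only [Prod.fst, Prod.snd]; omega, by dsimp only [Prod.fst, Prod.snd]; omega⟩
  · subst h
    rw [f_B0 (by omega)]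
    exact ⟨by dsimp only [Prod.fst, Prod.snd]; omega, by dsimp only [Prod.fst, Prod.snd]; omega, by dsimp only [Prod.fst, Prod.snd]; omega,
      by dsimp only [Prod.fst, Prod.snd]; omega⟩
  · rw [f_climb hu]
    exact ⟨by dsimp only [Prod.fst, Prod.snd]; omega, by dsimp only [Prod.fst, Prod.snd]; omega, by dsimp only [Prod.fst, Prod.snd]; omega,
      by dsimp only [Prod.fst, Prod.snd]; omega⟩
  · rw [f_desc (by omega) hb hw]
    by_cases hw1 : w < m - 1
    · rw [if_pos hw1]
      exact ⟨by dsimp only [Prod.fst, Prod.snd]; omega, by dsimp only [Prod.fst, Prod.snd]; omega, by dsimp only [Prod.fst, Prod.snd]; omega,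
        by dsimp only [Prod.fst, Prod.snd]; omega⟩
    · rw [if_neg hw1]
      exact ⟨by dsimp only [Prod.fst, Prod.snd]; omega, by dsimp only [Prod.fst, Prod.snd]; omega, by dsimp only [Prod.fst, Prod.snd]; omega,
        by dsimp only [Prod.fst, Prod.snd]; omega⟩
  · rw [f_Blane (by omega) hv]
    exact ⟨by dsimp only [Prod.fst, Prod.snd]; omega, by dsimp only [Prod.fst, Prod.snd]; omega, by dsimp only [Prod.fst, Prod.snd]; omega,
      by dsimp only [Prod.fst, Prod.snd]; omega⟩

end SnakeAux

namespace SnakeAux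

lemma adjR0 {x x' y y' : ℤ} (hx : x' = x + 1) (hy : y' = y) :
    elongatedTriInfGraph.Adj ((x, y), 0) ((x', y'), 0) := by rw [hx, hy]; exact adj_h0 x y

lemma adjL0 {x x' y y' : ℤ} (hx : x = x' + 1) (hy : y = y') :
    elongatedTriInfGraph.Adj ((x, y), 0) ((x', y'), 0) := by
  rw [hx, hy]; exact (adj_h0 x' y').symm

lemma adjR1 {x x' y y' : ℤ} (hx : x' = x + 1) (hy : y' = y) :
    elongatedTriInfGraph.Adj ((x, y), 1) ((x', y'), 1) := by rw [hx, hy]; exact adj_h1 x y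

lemma adjL1 {x x' y y' : ℤ} (hx : x = x' + 1) (hy : y = y') :
    elongatedTriInfGraph.Adj ((x, y), 1) ((x', y'), 1) := by
  rw [hx, hy]; exact (adj_h1 x' y').symm

lemma adjUV {x x' y y' : ℤ} (hx : x' = x) (hy : y' = y) :
    elongatedTriInfGraph.Adj ((x, y), 0) ((x', y'), 1) := by rw [hx, hy]; exact adj_v x y

lemma adjVU {x x' y y' : ℤ} (hx : x' = x) (hy : y' = y) :
    elongatedTriInfGraph.Adj ((x, y), 1) ((x', y'), 0) := by
  rw [hx, hy]; exact (adj_v x y).symm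

lemma adjUp {x x' y y' : ℤ} (hx : x' = x) (hy : y' = y + 1) :
    elongatedTriInfGraph.Adj ((x, y), 1) ((x', y'), 0) := by rw [hx, hy]; exact adj_d x y

lemma adjDn {x x' y y' : ℤ} (hx : x = x') (hy : y = y' + 1) :
    elongatedTriInfGraph.Adj ((x, y), 0) ((x', y'), 1) := by
  rw [hx, hy]; exact (adj_d x' y').symm

variable {m s : ℕ}

lemma snake_adj (hm : 3 ≤ m) (hs : 1 ≤ s) {t : ℕ} (ht : t + 1 < 2 * m * s) :
    elongatedTriInfGraph.Adj (snakeF m s t) (snakeF m s (t + 1)) := by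
  have hN := total_eq hm hs
  rcases region_split hm hs (show t < 2 * m * s by omega) with
    h | h | ⟨u, hu, rfl⟩ | ⟨b, w, hb, hw, rfl⟩ | ⟨v, hv, rfl⟩
  -- case A row
  · by_cases h2 : t + 1 < m
    · rw [f_A h, f_A h2]
      exact adjR0 (by push_cast; ring) rfl
    · have h3 : t + 1 = m := by omega
      rw [f_A h, h3, f_B0 (by omega)]
      exact adjUV (by omega) rfl
  -- t = m
  · rw [h, f_B0 (by omega)]
    by_cases h2 : 1 ≤ 2 * (s - 1)
    · rw [show m + 1 = m + 1 + 0 by ring, f_climb (by omega)]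
      rw [if_pos rfl]
      exact adjUp rfl (by norm_num)
    · have hs1 : s = 1 := by omega
      rw [show m + 1 = m + 1 + 2 * (s - 1) + (s - 1) * (2 * (m - 1)) + 0 by
        rw [hs1]; ring, f_Blane (by omega) (by omega)]
      exact adjL1 (by push_cast; ring) rfl
  -- climb
  · by_cases h2 : u + 1 < 2 * (s - 1)
    · rw [f_climb hu, show m + 1 + u + 1 = m + 1 + (u + 1) by ring, f_climb h2]
      by_cases hpar : u % 2 = 0
      · rw [if_pos hpar, if_neg (by omega)]
        exact adjUV rfl (by omega)
      · rw [if_neg hpar, if_pos (by omega)]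
        exact adjUp rfl (by omega)
    · have h3 : u + 1 = 2 * (s - 1) := by omega
      have hs2 : 2 ≤ s := by omega
      rw [f_climb hu, show m + 1 + u + 1 = m + 1 + 2 * (s - 1) + (0 * (2 * (m - 1)) + 0) by
        omega, f_desc (by omega) (by omega) (by omega)]
      rw [if_neg (by omega), if_pos (by omega)]
      exact adjL1 (by omega) (by omega)
  -- descent
  · have hR : 0 < 2 * (m - 1) := by omega
    rw [f_desc (by omega) hb hw]
    by_cases h6 : w + 1 < 2 * (m - 1)
    · rw [show m + 1 + 2 * (s - 1) + (b * (2 * (m - 1)) + w) + 1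
          = m + 1 + 2 * (s - 1) + (b * (2 * (m - 1)) + (w + 1)) by ring,
        f_desc (by omega) hb h6]
      by_cases h7 : w + 1 < m - 1
      · rw [if_pos (by omega), if_pos h7]
        exact adjL1 (by omega) rfl
      · by_cases h8 : w < m - 1
        · rw [if_pos h8, if_neg h7]
          exact adjVU (by omega) rfl
        · rw [if_neg h8, if_neg (by omega)]
          exact adjR0 (by omega) rfl
    · have h9 : w = 2 * (m - 1) - 1 := by omega
      rw [if_neg (by omega)]
      by_cases h10 : b + 1 < s - 1
      · rw [show m + 1 + 2 * (s - 1) + (b * (2 * (m - 1)) + w) + 1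
            = m + 1 + 2 * (s - 1) + ((b + 1) * (2 * (m - 1)) + 0) by
            rw [add_mul, one_mul]; omega,
          f_desc (by omega) h10 (by omega)]
        rw [if_pos (by omega)]
        exact adjDn (by omega) (by omega)
      · have h12 : 2 ≤ s := by omega
        rw [show m + 1 + 2 * (s - 1) + (b * (2 * (m - 1)) + w) + 1
            = m + 1 + 2 * (s - 1) + (s - 1) * (2 * (m - 1)) + 0 by
            have he : (s - 1) * (2 * (m - 1)) = (b + 1) * (2 * (m - 1)) := by
              rw [show b + 1 = s - 1 by omega]
            rw [he, add_mul, one_mul]; omega,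
          f_Blane (by omega) (by omega)]
        exact adjDn (by omega) (by omega)
  -- B-lane
  · have h2 : v + 1 < m - 1 := by omega
    rw [f_Blane (by omega) hv,
      show m + 1 + 2 * (s - 1) + (s - 1) * (2 * (m - 1)) + v + 1
        = m + 1 + 2 * (s - 1) + (s - 1) * (2 * (m - 1)) + (v + 1) by ring,
      f_Blane (by omega) h2]
    exact adjL1 (by omega) rfl

lemma snake_closing (hm : 3 ≤ m) (hs : 1 ≤ s) :
    elongatedTriInfGraph.Adj (snakeF m s (2 * m * s - 1)) (snakeF m s 0) := by
  have hN := total_eq hm hs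
  have h1 : 2 * m * s - 1 = m + 1 + 2 * (s - 1) + (s - 1) * (2 * (m - 1)) + (m - 2) := by omega
  rw [h1, f_Blane (by omega) (by omega), f_A (by omega)]
  exact adjVU (by omega) (by norm_num)

end SnakeAux

namespace SnakeAux

lemma exists_hermite (L : AddSubgroup (ℤ × ℤ)) (hL : Admissible L) :
    ∃ (m s : ℕ) (r : ℤ), 3 ≤ m ∧ 1 ≤ s ∧
      (((m : ℤ), 0) : ℤ × ℤ) ∈ L ∧ ((r, (s : ℤ)) : ℤ × ℤ) ∈ L ∧
      (∀ v : ℤ × ℤ, v ∈ L → |v.2| < s → v.2 = 0) ∧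
      (∀ x : ℤ, ((x, 0) : ℤ × ℤ) ∈ L → |x| < m → x = 0) := by
  letI : Finite ((ℤ × ℤ) ⧸ L) := hL.1
  -- finite order of generators in quotient
  have key : ∀ z : ℤ × ℤ, ∃ d : ℕ, 0 < d ∧ (d : ℤ) • z ∈ L := by
    intro z
    refine ⟨addOrderOf (QuotientAddGroup.mk z : (ℤ × ℤ) ⧸ L), addOrderOf_pos _, ?_⟩
    set q : (ℤ × ℤ) ⧸ L := QuotientAddGroup.mk z with hq
    have h1 : (addOrderOf q) • q = 0 := addOrderOf_nsmul_eq_zero _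
    have h2 : (QuotientAddGroup.mk (((addOrderOf q : ℤ)) • z) : (ℤ × ℤ) ⧸ L) = 0 := by
      rw [show ((addOrderOf q : ℤ)) • z = (addOrderOf q) • z from natCast_zsmul z _]
      rw [QuotientAddGroup.mk_nsmul]
      exact h1
    rwa [QuotientAddGroup.eq_zero_iff] at h2
  obtain ⟨d1, hd1, hd1L⟩ := key (1, 0)
  obtain ⟨d2, hd2, hd2L⟩ := key (0, 1)
  have hd1L' : (((d1 : ℤ), 0) : ℤ × ℤ) ∈ L := by
    have h : ((d1 : ℤ) • ((1, 0) : ℤ × ℤ)) = (((d1 : ℤ), 0) : ℤ × ℤ) := by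
      simp [Prod.ext_iff]
    rwa [h] at hd1L
  have hd2L' : ((0, (d2 : ℤ)) : ℤ × ℤ) ∈ L := by
    have h : ((d2 : ℤ) • ((0, 1) : ℤ × ℤ)) = ((0, (d2 : ℤ)) : ℤ × ℤ) := by
      simp [Prod.ext_iff]
    rwa [h] at hd2L
  set M : AddSubgroup ℤ := L.comap (AddMonoidHom.inl ℤ ℤ) with hM
  obtain ⟨gm, hgm⟩ := Int.subgroup_cyclic M
  have hmemM : ∀ x : ℤ, x ∈ M ↔ ∃ n : ℤ, n • gm = x := by
    intro x
    rw [hgm, AddSubgroup.mem_closure_singleton]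
  have hMiff : ∀ x : ℤ, x ∈ M ↔ ((x, 0) : ℤ × ℤ) ∈ L := by
    intro x
    rw [hM, AddSubgroup.mem_comap]
    rfl
  have hgm0 : gm ≠ 0 := by
    rintro rfl
    obtain ⟨n, hn⟩ := (hmemM (d1 : ℤ)).mp ((hMiff _).mpr hd1L')
    simp at hn
    omega
  set S : AddSubgroup ℤ := L.map (AddMonoidHom.snd ℤ ℤ) with hS
  obtain ⟨gs, hgs⟩ := Int.subgroup_cyclic S
  have hmemS : ∀ x : ℤ, x ∈ S ↔ ∃ n : ℤ, n • gs = x := by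
    intro x
    rw [hgs, AddSubgroup.mem_closure_singleton]
  have hgs0 : gs ≠ 0 := by
    rintro rfl
    have hd2S : (d2 : ℤ) ∈ S := ⟨(0, (d2 : ℤ)), hd2L', rfl⟩
    obtain ⟨n, hn⟩ := (hmemS _).mp hd2S
    simp at hn
    omega
  have hmL : (((gm.natAbs : ℤ), 0) : ℤ × ℤ) ∈ L := by
    refine (hMiff _).mp ((hmemM _).mpr ?_)
    rcases Int.natAbs_eq gm with h | h
    · exact ⟨1, by rw [one_smul]; omega⟩
    · exact ⟨-1, by rw [neg_smul, one_smul]; omega⟩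
  have hsS : ((gs.natAbs : ℤ)) ∈ S := by
    refine (hmemS _).mpr ?_
    rcases Int.natAbs_eq gs with h | h
    · exact ⟨1, by rw [one_smul]; omega⟩
    · exact ⟨-1, by rw [neg_smul, one_smul]; omega⟩
  obtain ⟨⟨r, s2⟩, hrL, hrs⟩ := hsS
  have hrs' : s2 = (gs.natAbs : ℤ) := hrs
  subst hrs'
  have hm3 : 3 ≤ gm.natAbs := by
    have hne : (((gm.natAbs : ℤ), 0) : ℤ × ℤ) ≠ 0 := by
      simp [Prod.ext_iff]
      omega
    have := hL.2 _ hmL hne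
    simp only [not_and, not_le] at this
    have h2 : |(0 : ℤ)| ≤ 2 := by norm_num
    by_contra hc
    have : ¬ (|((gm.natAbs : ℤ), (0:ℤ)).1| ≤ 2 ∧ |((gm.natAbs : ℤ), (0:ℤ)).2| ≤ 2) :=
      hL.2 _ hmL hne
    apply this
    constructor
    · simp only [Prod.fst]
      rw [abs_of_nonneg (by positivity)]
      omega
    · norm_num
  refine ⟨gm.natAbs, gs.natAbs, r, hm3, by omega, hmL, hrL, ?_, ?_⟩
  · intro v hv habs
    have hvS : v.2 ∈ S := ⟨v, hv, rfl⟩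
    obtain ⟨n, hn⟩ := (hmemS _).mp hvS
    rw [smul_eq_mul] at hn
    rcases eq_or_ne n 0 with rfl | hn0
    · simp at hn
      omega
    · exfalso
      have h1 : |v.2| = |n| * |gs| := by rw [← hn, abs_mul]
      have h2 : 1 ≤ |n| := Int.one_le_abs hn0
      have h3 : 1 ≤ |gs| := Int.one_le_abs hgs0
      have h4 : (gs.natAbs : ℤ) = |gs| := (Int.abs_eq_natAbs gs).symm
      nlinarith
  · intro x hx habs
    obtain ⟨n, hn⟩ := (hmemM _).mp ((hMiff _).mpr hx)
    rw [smul_eq_mul] at hn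
    rcases eq_or_ne n 0 with rfl | hn0
    · simp at hn
      omega
    · exfalso
      have h1 : |x| = |n| * |gm| := by rw [← hn, abs_mul]
      have h2 : 1 ≤ |n| := Int.one_le_abs hn0
      have h3 : 1 ≤ |gm| := Int.one_le_abs hgm0
      have h4 : (gm.natAbs : ℤ) = |gm| := (Int.abs_eq_natAbs gm).symm
      nlinarith

end SnakeAux

namespace SnakeAux

lemma rect_surj (L : AddSubgroup (ℤ × ℤ)) {m s : ℕ} (r : ℤ) (hm : 1 ≤ m) (hs : 1 ≤ s)
    (hmL : (((m : ℤ), 0) : ℤ × ℤ) ∈ L) (hrL : ((r, (s : ℤ)) : ℤ × ℤ) ∈ L) (z : ℤ × ℤ) :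
    ∃ i j : ℤ, 0 ≤ i ∧ i < m ∧ 0 ≤ j ∧ j < s ∧ z - (i, j) ∈ L := by
  have hs0 : (0 : ℤ) < s := by exact_mod_cast hs
  have hm0 : (0 : ℤ) < m := by exact_mod_cast hm
  set q := z.2 / (s : ℤ) with hq
  set w := z.1 - q * r with hw
  set p := w / (m : ℤ) with hp
  refine ⟨w % (m : ℤ), z.2 % (s : ℤ), Int.emod_nonneg _ (by omega),
    Int.emod_lt_of_pos _ hm0, Int.emod_nonneg _ (by omega), Int.emod_lt_of_pos _ hs0, ?_⟩
  have heq : z - (w % (m : ℤ), z.2 % (s : ℤ))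
      = q • ((r, (s : ℤ)) : ℤ × ℤ) + p • (((m : ℤ), 0) : ℤ × ℤ) := by
    rw [Prod.ext_iff]
    constructor
    · simp only [Prod.fst_sub, Prod.fst_add, Prod.smul_fst, smul_eq_mul]
      rw [hp, Int.emod_def, hw]
      ring
    · simp only [Prod.snd_sub, Prod.snd_add, Prod.smul_snd, smul_eq_mul]
      rw [Int.emod_def, hq]
      ring
  rw [heq]
  exact L.add_mem (L.zsmul_mem hrL q) (L.zsmul_mem hmL p)

end SnakeAux

namespace SnakeAux

lemma card_quot (L : AddSubgroup (ℤ × ℤ)) {m s : ℕ} (r : ℤ) (hm : 1 ≤ m) (hs : 1 ≤ s)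
    (hmL : (((m : ℤ), 0) : ℤ × ℤ) ∈ L) (hrL : ((r, (s : ℤ)) : ℤ × ℤ) ∈ L)
    (hinj2 : ∀ v : ℤ × ℤ, v ∈ L → |v.2| < s → v.2 = 0)
    (hinj1 : ∀ x : ℤ, ((x, 0) : ℤ × ℤ) ∈ L → |x| < m → x = 0)
    [Fintype ((ℤ × ℤ) ⧸ L)] [DecidableEq ((ℤ × ℤ) ⧸ L)] :
    Fintype.card ((ℤ × ℤ) ⧸ L) = m * s := by
  classical
  set T : Finset (ℤ × ℤ) := Finset.Ico (0 : ℤ) (m : ℤ) ×ˢ Finset.Ico (0 : ℤ) (s : ℤ) with hT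
  have hTcard : T.card = m * s := by
    rw [hT, Finset.card_product, Int.card_Ico, Int.card_Ico]
    simp
  have hinj : ∀ p ∈ T, ∀ q ∈ T,
      (QuotientAddGroup.mk p : (ℤ × ℤ) ⧸ L) = QuotientAddGroup.mk q → p = q := by
    intro p hp q hq hpq
    rw [QuotientAddGroup.eq_iff_sub_mem] at hpq
    simp only [hT, Finset.mem_product, Finset.mem_Ico] at hp hq
    have h2 : (p - q).2 = 0 := hinj2 _ hpq (by
      simp only [Prod.snd_sub]
      rw [abs_lt]
      omega)
    have hpq' : ((p - q).1, 0) ∈ L := by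
      rw [← h2]
      exact hpq
    have h1 : (p - q).1 = 0 := hinj1 _ hpq' (by
      simp only [Prod.fst_sub]
      rw [abs_lt]
      omega)
    have : p - q = 0 := Prod.ext_iff.mpr ⟨h1, h2⟩
    exact sub_eq_zero.mp this
  have himg : T.image (fun p => (QuotientAddGroup.mk p : (ℤ × ℤ) ⧸ L)) = Finset.univ := by
    rw [Finset.eq_univ_iff_forall]
    intro x
    obtain ⟨z, rfl⟩ := QuotientAddGroup.mk_surjective x
    obtain ⟨i, j, hi0, him, hj0, hjs, hmem⟩ := rect_surj L r hm hs hmL hrL z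
    rw [Finset.mem_image]
    refine ⟨(i, j), by simp [hT, Finset.mem_Ico]; omega, ?_⟩
    rw [QuotientAddGroup.eq_iff_sub_mem]
    have : (i, j) - z = -(z - (i, j)) := by ring
    rw [this]
    exact L.neg_mem hmem
  calc Fintype.card ((ℤ × ℤ) ⧸ L) = Finset.univ.card := rfl
    _ = (T.image (fun p => (QuotientAddGroup.mk p : (ℤ × ℤ) ⧸ L))).card := by rw [himg]
    _ = T.card := Finset.card_image_of_injOn hinj
    _ = m * s := hTcard

end SnakeAux


namespace SnakeAux

def projMap (L : AddSubgroup (ℤ × ℤ)) : (ℤ × ℤ) × Fin 2 → ((ℤ × ℤ) ⧸ L) × Fin 2 :=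
  fun v => (QuotientAddGroup.mk v.1, v.2)

lemma e₁_not_mem {L : AddSubgroup (ℤ × ℤ)} (hL : Admissible L) : e₁ ∉ L := by
  intro hc
  exact (hL.2 e₁ hc (by simp [e₁, Prod.ext_iff])) ⟨by norm_num [e₁], by norm_num [e₁]⟩

lemma proj_ne {L : AddSubgroup (ℤ × ℤ)} (hL : Admissible L) {u v : (ℤ × ℤ) × Fin 2}
    (h : elongatedTriRel e₁ e₂ u v) : projMap L u ≠ projMap L v := by
  rcases h with ⟨x, rfl, rfl⟩ | ⟨x, rfl, rfl⟩ | ⟨x, rfl, rfl⟩ | ⟨x, rfl, rfl⟩ | ⟨x, rfl, rfl⟩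
  · simp only [projMap, Ne, Prod.ext_iff, not_and]
    intro hc _
    rw [QuotientAddGroup.eq_iff_sub_mem] at hc
    have hmem : -e₁ ∈ L := by
      have h2 : x - (x + e₁) = -e₁ := by ring
      rwa [h2] at hc
    exact e₁_not_mem hL (by simpa using L.neg_mem hmem)
  · simp only [projMap, Ne, Prod.ext_iff, not_and]
    intro hc _
    rw [QuotientAddGroup.eq_iff_sub_mem] at hc
    have hmem : -e₁ ∈ L := by
      have h2 : x - (x + e₁) = -e₁ := by ring
      rwa [h2] at hc
    exact e₁_not_mem hL (by simpa using L.neg_mem hmem)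
  · simp [projMap, Prod.ext_iff]
  · simp [projMap, Prod.ext_iff]
  · simp [projMap, Prod.ext_iff]

lemma rel_map (L : AddSubgroup (ℤ × ℤ)) {u v : (ℤ × ℤ) × Fin 2}
    (h : elongatedTriRel e₁ e₂ u v) :
    elongatedTriRel (QuotientAddGroup.mk e₁ : (ℤ × ℤ) ⧸ L) (QuotientAddGroup.mk e₂)
      (projMap L u) (projMap L v) := by
  rcases h with ⟨x, rfl, rfl⟩ | ⟨x, rfl, rfl⟩ | ⟨x, rfl, rfl⟩ | ⟨x, rfl, rfl⟩ | ⟨x, rfl, rfl⟩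
  · exact Or.inl ⟨QuotientAddGroup.mk x, rfl, by simp [projMap]⟩
  · exact Or.inr (Or.inl ⟨QuotientAddGroup.mk x, rfl, by simp [projMap]⟩)
  · exact Or.inr (Or.inr (Or.inl ⟨QuotientAddGroup.mk x, rfl, by simp [projMap]⟩))
  · exact Or.inr (Or.inr (Or.inr (Or.inl ⟨QuotientAddGroup.mk x, rfl, by simp [projMap]⟩)))
  · exact Or.inr (Or.inr (Or.inr (Or.inr ⟨QuotientAddGroup.mk x, rfl, by simp [projMap]⟩)))

def projHom (L : AddSubgroup (ℤ × ℤ)) (hL : Admissible L) :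
    elongatedTriInfGraph →g elongatedTriTorusGraph L where
  toFun := projMap L
  map_rel' := by
    intro u v huv
    rw [elongatedTriInfGraph, elongatedTriGraph, SimpleGraph.fromRel_adj] at huv
    rw [elongatedTriTorusGraph, elongatedTriGraph, SimpleGraph.fromRel_adj]
    obtain ⟨hne, hrel⟩ := huv
    rcases hrel with h | h
    · exact ⟨proj_ne hL h, Or.inl (rel_map L h)⟩
    · exact ⟨(proj_ne hL h).symm, Or.inr (rel_map L h)⟩

end SnakeAux

/-- Every elongated-triangular torus graph (type `{3³,4²}`) has a contractible Hamiltonian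
cycle: there is a cycle `p` in the infinite elongated-triangular graph `G∞` which the
projection `π` (reduction of the first coordinate modulo `L`) maps isomorphically onto a
Hamiltonian cycle of `G(L)` (it maps onto a cycle through every vertex; a cycle repeats no
vertex, so `π` restricted to `p` is injective, i.e. an isomorphism of cycles). -/
theorem elongatedTriTorusGraph_contractible_hamiltonian
    (L : AddSubgroup (ℤ × ℤ)) (hL : Admissible L) :
    ∃ π : elongatedTriInfGraph →g elongatedTriTorusGraph L,
      (∀ (v : ℤ × ℤ) (i : Fin 2), π (v, i) = (QuotientAddGroup.mk v, i)) ∧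
      ∃ (a : (ℤ × ℤ) × Fin 2) (p : elongatedTriInfGraph.Walk a a),
        p.IsCycle ∧ (p.map π).IsCycle ∧ ∀ v, v ∈ (p.map π).support := by
  classical
  obtain ⟨m, s, r, hm, hs, hmL, hrL, hinj2, hinj1⟩ := SnakeAux.exists_hermite L hL
  set N := 2 * m * s with hNdef
  have hN6 : 6 ≤ N := by
    have h1 : 2 * 3 * 1 ≤ 2 * m * s := Nat.mul_le_mul (Nat.mul_le_mul le_rfl hm) hs
    omega
  have hN1 : 1 ≤ N := by omega
  set f : ℕ → (ℤ × ℤ) × Fin 2 := SnakeAux.snakeF m s with hf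
  set l : List ((ℤ × ℤ) × Fin 2) := (List.range (N - 1)).map (fun i => f (1 + i)) with hl
  have hchain : List.Chain elongatedTriInfGraph.Adj (f 0) (l ++ [f 0]) :=
    chain_cycle _ f N hN1 (fun t ht => SnakeAux.snake_adj hm hs ht)
      (SnakeAux.snake_closing hm hs)
  have hful : f 0 :: l = (List.range N).map f := cons_map_range f N hN1
  have hfinj : ∀ x ∈ List.range N, ∀ y ∈ List.range N, f x = f y → x = y := by
    intro x hx y hy hxy
    rw [List.mem_range] at hx hy
    have h := congrArg (SnakeAux.snakeG m s) hxy
    rwa [hf, SnakeAux.snake_gf hm hs hx, SnakeAux.snake_gf hm hs hy] at h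
  have hnodupZ : ((List.range N).map f).Nodup :=
    (List.nodup_range (n := N)).map_on hfinj
  have hndl : (f 0 :: l).Nodup := by rw [hful]; exact hnodupZ
  have hllen : 2 ≤ l.length := by
    rw [hl, List.length_map, List.length_range]
    omega
  set π : elongatedTriInfGraph →g elongatedTriTorusGraph L := SnakeAux.projHom L hL with hπ
  have hπinj : ∀ x ∈ f 0 :: l, ∀ y ∈ f 0 :: l, π x = π y → x = y := by
    intro x hx y hy hxy
    rw [hful] at hx hy
    obtain ⟨tx, htx, rfl⟩ := List.mem_map.mp hx
    obtain ⟨ty, hty, rfl⟩ := List.mem_map.mp hy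
    rw [List.mem_range] at htx hty
    have hmx := SnakeAux.snake_mem hm hs htx
    have hmy := SnakeAux.snake_mem hm hs hty
    rw [← hf] at hmx hmy
    have hxy' : ((QuotientAddGroup.mk (f tx).1 : (ℤ × ℤ) ⧸ L), (f tx).2)
        = ((QuotientAddGroup.mk (f ty).1 : (ℤ × ℤ) ⧸ L), (f ty).2) := hxy
    have hc1 := (Prod.ext_iff.mp hxy').1
    have hc2 := (Prod.ext_iff.mp hxy').2
    rw [QuotientAddGroup.eq_iff_sub_mem] at hc1
    have h2 : ((f tx).1 - (f ty).1).2 = 0 := hinj2 _ hc1 (by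
      simp only [Prod.snd_sub]
      rw [abs_lt]
      omega)
    have hmem1 : (((f tx).1 - (f ty).1).1, 0) ∈ L := by
      rw [← h2]
      exact hc1
    have h1 : ((f tx).1 - (f ty).1).1 = 0 := hinj1 _ hmem1 (by
      simp only [Prod.fst_sub]
      rw [abs_lt]
      omega)
    have heq1 : (f tx).1 = (f ty).1 := by
      have h0 : (f tx).1 - (f ty).1 = 0 := Prod.ext_iff.mpr ⟨h1, h2⟩
      exact sub_eq_zero.mp h0
    exact Prod.ext_iff.mpr ⟨heq1, hc2⟩
  refine ⟨π, fun v i => rfl, f 0, buildWalk elongatedTriInfGraph (f 0) (f 0) l hchain,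
    buildWalk_isCycle _ _ _ hchain hndl hllen, ?_, ?_⟩
  · rw [buildWalk_map]
    apply buildWalk_isCycle
    · have hr : (π (f 0) :: (l.map π)) = ((f 0 :: l).map π) := by simp
      rw [hr]
      exact hndl.map_on hπinj
    · rw [List.length_map]
      exact hllen
  · intro v
    letI : Finite ((ℤ × ℤ) ⧸ L) := hL.1
    letI : Fintype ((ℤ × ℤ) ⧸ L) := Fintype.ofFinite _
    have hcardQ : Fintype.card ((ℤ × ℤ) ⧸ L) = m * s :=
      SnakeAux.card_quot L r (by omega) hs hmL hrL hinj2 hinj1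
    have hcard2 : Fintype.card (((ℤ × ℤ) ⧸ L) × Fin 2) = N := by
      rw [Fintype.card_prod, hcardQ, Fintype.card_fin, hNdef]
      ring
    set ML : List ((((ℤ × ℤ) ⧸ L)) × Fin 2) := (f 0 :: l).map π with hML
    have hMLnodup : ML.Nodup := hndl.map_on hπinj
    have hMLlen : ML.length = N := by
      rw [hML, List.length_map, hful, List.length_map, List.length_range]
    have huniv : ML.toFinset = Finset.univ := by
      apply Finset.eq_univ_of_card
      rw [List.toFinset_card_of_nodup hMLnodup, hMLlen, hcard2]
    have hvML : v ∈ ML := by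
      rw [← List.mem_toFinset, huniv]
      exact Finset.mem_univ v
    rw [buildWalk_map, buildWalk_support]
    have hvML' : v ∈ π (f 0) :: l.map π := by
      have := hvML
      rw [hML, List.map_cons] at this
      exact this
    rcases List.mem_cons.mp hvML' with h | h
    · exact List.mem_cons.mpr (Or.inl h)
    · exact List.mem_cons.mpr (Or.inr (List.mem_append.mpr (Or.inl h)))
end

section
/- For every admissible subgroup L of ℤ × ℤ, the snub-hexagonal torus graph G(L) — the edge graph of the semi-equivelar map of type {3⁴,6} on the torus determined by L — is Hamiltonian. -/
/-- The six direction vectors `d : ℤ/6 → ℤ × ℤ`: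
`d₀ = (1,0)`, `d₁ = (0,1)`, `d₂ = (−1,1)`, `d₃ = (−1,0)`, `d₄ = (0,−1)`, `d₅ = (1,−1)`. -/
def d : Fin 6 → ℤ × ℤ := ![(1, 0), (0, 1), (-1, 1), (-1, 0), (0, -1), (1, -1)]

/-- The edge relation of the snub-hexagonal graph over an abelian group `A`, with
direction vectors `D : ℤ/6 → A` (second coordinates are taken mod 6). -/
def snubHexRel {A : Type*} [AddCommGroup A] (D : Fin 6 → A) :
    A × Fin 6 → A × Fin 6 → Prop := fun u v =>
  (∃ (x : A) (t : Fin 6), u = (x, t) ∧ v = (x, t + 1)) ∨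
  (∃ (x : A) (t : Fin 6), u = (x, t) ∧ v = (x + D t, t + 4)) ∨
  (∃ (x : A) (t : Fin 6), u = (x, t + 1) ∧ v = (x + D t, t + 4)) ∨
  (∃ (x : A) (t : Fin 6), u = (x, t + 1) ∧ v = (x + D t, t + 3))

/-- The snub-hexagonal graph over an abelian group `A`. -/
def snubHexGraph {A : Type*} [AddCommGroup A] (D : Fin 6 → A) : SimpleGraph (A × Fin 6) :=
  SimpleGraph.fromRel (snubHexRel D)

/-- The snub-hexagonal torus graph `G(L)`, the edge graph of the semi-equivelar map of
type `{3⁴,6}` on the torus determined by `L`. -/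
def snubHexTorusGraph (L : AddSubgroup (ℤ × ℤ)) :
    SimpleGraph (((ℤ × ℤ) ⧸ L) × Fin 6) :=
  snubHexGraph (fun t => QuotientAddGroup.mk (d t))

namespace SnubHexHam

variable (L : AddSubgroup (ℤ × ℤ))

abbrev V := ((ℤ × ℤ) ⧸ L) × Fin 6

def vtx (i j : ℤ) (t : Fin 6) : V L := (QuotientAddGroup.mk (i, j), t)

lemma mk_add' (i j a b : ℤ) :
    (QuotientAddGroup.mk (i, j) : (ℤ × ℤ) ⧸ L) + QuotientAddGroup.mk (a, b)
      = QuotientAddGroup.mk (i + a, j + b) := by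
  rw [← QuotientAddGroup.mk_add]; rfl

lemma vtx_ne_of_t {i j i' j' : ℤ} {t t' : Fin 6} (h : t ≠ t') :
    vtx L i j t ≠ vtx L i' j' t' := fun he => h (congrArg Prod.snd he)

lemma adj_hex (i j : ℤ) (t : Fin 6) :
    (snubHexTorusGraph L).Adj (vtx L i j t) (vtx L i j (t + 1)) := by
  simp only [snubHexTorusGraph, snubHexGraph, SimpleGraph.fromRel_adj]
  refine ⟨vtx_ne_of_t L (by revert t; decide), Or.inl ?_⟩
  exact Or.inl ⟨QuotientAddGroup.mk (i, j), t, rfl, rfl⟩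

lemma adj_hex' (i j : ℤ) (t t' : Fin 6) (h : t' = t + 1) :
    (snubHexTorusGraph L).Adj (vtx L i j t) (vtx L i j t') := by
  subst h; exact adj_hex L i j t

lemma adj_R (i j : ℤ) :
    (snubHexTorusGraph L).Adj (vtx L i j 0) (vtx L (i + 1) j 4) := by
  simp only [snubHexTorusGraph, snubHexGraph, SimpleGraph.fromRel_adj]
  refine ⟨vtx_ne_of_t L (by decide), Or.inl (Or.inr (Or.inl ⟨QuotientAddGroup.mk (i, j), 0, rfl, ?_⟩))⟩
  show vtx L (i+1) j 4 = (_ + (QuotientAddGroup.mk (d 0) : (ℤ×ℤ)⧸L), (0 : Fin 6) + 4)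
  rw [show d 0 = ((1:ℤ), (0:ℤ)) from rfl, mk_add']
  show vtx L (i+1) j 4 = (QuotientAddGroup.mk (i+1, j+0), 4)
  rw [add_zero]; rfl

lemma adj_L (i j : ℤ) :
    (snubHexTorusGraph L).Adj (vtx L i j 1) (vtx L (i + 1) j 3) := by
  simp only [snubHexTorusGraph, snubHexGraph, SimpleGraph.fromRel_adj]
  refine ⟨vtx_ne_of_t L (by decide), Or.inl (Or.inr (Or.inr (Or.inr ⟨QuotientAddGroup.mk (i, j), 0, rfl, ?_⟩)))⟩
  show vtx L (i+1) j 3 = (_ + (QuotientAddGroup.mk (d 0) : (ℤ×ℤ)⧸L), (0 : Fin 6) + 3)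
  rw [show d 0 = ((1:ℤ), (0:ℤ)) from rfl, mk_add']
  show vtx L (i+1) j 3 = (QuotientAddGroup.mk (i+1, j+0), 3)
  rw [add_zero]; rfl

lemma adj_U1 (i j : ℤ) :
    (snubHexTorusGraph L).Adj (vtx L (i + 1) j 3) (vtx L i (j + 1) 0) := by
  simp only [snubHexTorusGraph, snubHexGraph, SimpleGraph.fromRel_adj]
  refine ⟨?_, Or.inl (Or.inr (Or.inr (Or.inl ⟨QuotientAddGroup.mk (i+1, j), 2, rfl, ?_⟩)))⟩
  · exact vtx_ne_of_t L (by decide)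
  show vtx L i (j+1) 0 = (_ + (QuotientAddGroup.mk (d 2) : (ℤ×ℤ)⧸L), (2 : Fin 6) + 4)
  rw [show d 2 = ((-1:ℤ), (1:ℤ)) from rfl, mk_add']
  rw [show (i+1+-1 : ℤ) = i by ring]; rfl

lemma adj_U2 (i j : ℤ) :
    (snubHexTorusGraph L).Adj (vtx L i j 1) (vtx L i (j + 1) 5) := by
  simp only [snubHexTorusGraph, snubHexGraph, SimpleGraph.fromRel_adj]
  refine ⟨vtx_ne_of_t L (by decide), Or.inl (Or.inr (Or.inl ⟨QuotientAddGroup.mk (i, j), 1, rfl, ?_⟩))⟩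
  show vtx L i (j+1) 5 = (_ + (QuotientAddGroup.mk (d 1) : (ℤ×ℤ)⧸L), (1 : Fin 6) + 4)
  rw [show d 1 = ((0:ℤ), (1:ℤ)) from rfl, mk_add']
  show vtx L i (j+1) 5 = (QuotientAddGroup.mk (i+0, j+1), 5)
  rw [add_zero]; rfl



/-! ## The Hamiltonian cycle as an explicit list -/

def botF (j : ℤ) : ℕ → ℤ → List (V L)
  | 0, _ => []
  | s+1, x => vtx L x j 4 :: vtx L x j 5 :: vtx L x j 0 :: botF j s (x+1)

def topF (j : ℤ) : ℕ → ℤ → List (V L)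
  | 0, _ => []
  | s+1, x => vtx L x j 1 :: vtx L x j 2 :: vtx L x j 3 :: topF j s (x-1)

def finRow (j : ℤ) : List (V L) :=
  [vtx L 0 j 1, vtx L 0 j 2, vtx L 0 j 3, vtx L 0 j 4, vtx L 0 j 5]

def Dp (N1 : ℕ) : ℕ → ℤ → List (V L)
  | 0, _ => []
  | h+1, j => vtx L 0 j 0 ::
      (botF L j N1 1 ++ (topF L j N1 (N1 : ℤ) ++ (Dp N1 h (j+1) ++ finRow L j)))

section Lists
variable {L}

/- head? and getLast? facts -/
lemma botF_head? (j : ℤ) (s : ℕ) (x : ℤ) :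
    (botF L j (s+1) x).head? = some (vtx L x j 4) := rfl

lemma topF_head? (j : ℤ) (s : ℕ) (x : ℤ) :
    (topF L j (s+1) x).head? = some (vtx L x j 1) := rfl

lemma getLast?_cons_ne {α : Type*} (a : α) {l : List α} (h : l ≠ []) :
    (a :: l).getLast? = l.getLast? := by
  cases l with
  | nil => exact absurd rfl h
  | cons b t => exact List.getLast?_cons_cons

lemma ne_nil_of_getLast? {α : Type*} {l : List α} {z : α} (h : l.getLast? = some z) :
    l ≠ [] := by intro e; subst e; simp at h

lemma botF_ne_nil (j : ℤ) (s : ℕ) (x : ℤ) : botF L j (s+1) x ≠ [] := by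
  rw [botF]; simp

lemma topF_ne_nil (j : ℤ) (s : ℕ) (x : ℤ) : topF L j (s+1) x ≠ [] := by
  rw [topF]; simp

lemma botF_getLast? (j : ℤ) : ∀ (s : ℕ) (x : ℤ),
    (botF L j (s+1) x).getLast? = some (vtx L (x+s) j 0)
  | 0, x => by simp [botF]
  | s+1, x => by
      rw [botF, List.getLast?_cons_cons, List.getLast?_cons_cons,
        getLast?_cons_ne _ (botF_ne_nil j s (x+1)), botF_getLast? j s (x+1)]
      congr 2
      push_cast; ring

lemma topF_getLast? (j : ℤ) : ∀ (s : ℕ) (x : ℤ),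
    (topF L j (s+1) x).getLast? = some (vtx L (x-s) j 3)
  | 0, x => by simp [topF]
  | s+1, x => by
      rw [topF, List.getLast?_cons_cons, List.getLast?_cons_cons,
        getLast?_cons_ne _ (topF_ne_nil j s (x-1)), topF_getLast? j s (x-1)]
      congr 2
      push_cast; ring

lemma finRow_getLast? (j : ℤ) : (finRow L j).getLast? = some (vtx L 0 j 5) := rfl

lemma finRow_ne_nil (j : ℤ) : finRow L j ≠ [] := by simp [finRow]

lemma Dp_head? (N1 h : ℕ) (j : ℤ) : (Dp L N1 (h+1) j).head? = some (vtx L 0 j 0) := rfl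

lemma Dp_getLast? (N1 : ℕ) (h : ℕ) (j : ℤ) :
    (Dp L N1 (h+1) j).getLast? = some (vtx L 0 j 5) := by
  rw [Dp]
  have hfin : (Dp L N1 h (j+1) ++ finRow L j).getLast? = some (vtx L 0 j 5) := by
    rw [List.getLast?_append, finRow_getLast?]; rfl
  have h2 : (topF L j N1 (N1:ℤ) ++ (Dp L N1 h (j+1) ++ finRow L j)).getLast? = some (vtx L 0 j 5) := by
    rw [List.getLast?_append, hfin]; rfl
  have h3 : (botF L j N1 1 ++ (topF L j N1 (N1:ℤ) ++ (Dp L N1 h (j+1) ++ finRow L j))).getLast?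
      = some (vtx L 0 j 5) := by
    rw [List.getLast?_append, h2]; rfl
  rw [getLast?_cons_ne _ (by
    intro e
    have := h3
    rw [e] at this
    simp at this), h3]


/-! ### Chains -/

lemma chain'_botF (j : ℤ) : ∀ (s : ℕ) (x : ℤ), List.Chain' (snubHexTorusGraph L).Adj (botF L j s x)
  | 0, x => by simp [botF, List.Chain']
  | s+1, x => by
      rw [botF]
      refine List.isChain_cons_cons.mpr ⟨adj_hex' L x j 4 5 (by decide), ?_⟩
      refine List.isChain_cons_cons.mpr ⟨adj_hex' L x j 5 0 (by decide), ?_⟩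
      refine List.isChain_cons.mpr ⟨?_, chain'_botF j s (x+1)⟩
      intro y hy
      cases s with
      | zero => simp [botF] at hy
      | succ s => rw [botF_head? j s (x+1)] at hy; rw [← Option.some_inj.mp hy]; exact adj_R L x j

lemma chain'_topF (j : ℤ) : ∀ (s : ℕ) (x : ℤ), List.Chain' (snubHexTorusGraph L).Adj (topF L j s x)
  | 0, x => by simp [topF, List.Chain']
  | s+1, x => by
      rw [topF]
      refine List.isChain_cons_cons.mpr ⟨adj_hex' L x j 1 2 (by decide), ?_⟩
      refine List.isChain_cons_cons.mpr ⟨adj_hex' L x j 2 3 (by decide), ?_⟩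
      refine List.isChain_cons.mpr ⟨?_, chain'_topF j s (x-1)⟩
      intro y hy
      cases s with
      | zero => simp [topF] at hy
      | succ s =>
          rw [topF_head? j s (x-1)] at hy; rw [← Option.some_inj.mp hy]
          have := (adj_L L (x-1) j).symm
          rwa [sub_add_cancel] at this

lemma chain'_finRow (j : ℤ) : List.Chain' (snubHexTorusGraph L).Adj (finRow L j) := by
  rw [finRow]
  refine List.isChain_cons_cons.mpr ⟨adj_hex' L 0 j 1 2 (by decide), ?_⟩
  refine List.isChain_cons_cons.mpr ⟨adj_hex' L 0 j 2 3 (by decide), ?_⟩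
  refine List.isChain_cons_cons.mpr ⟨adj_hex' L 0 j 3 4 (by decide), ?_⟩
  refine List.isChain_cons_cons.mpr ⟨adj_hex' L 0 j 4 5 (by decide), ?_⟩
  simp

lemma chain'_Dp (N1 : ℕ) (hN1 : 1 ≤ N1) :
    ∀ (h : ℕ) (j : ℤ), List.Chain' (snubHexTorusGraph L).Adj (Dp L N1 h j)
  | 0, j => by simp [Dp, List.Chain']
  | h+1, j => by
      obtain ⟨s, rfl⟩ : ∃ s, N1 = s + 1 := ⟨N1 - 1, by omega⟩
      rw [Dp]
      -- tail chain: botF ++ (topF ++ (Dp ++ finRow))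
      have hDF : List.Chain' (snubHexTorusGraph L).Adj (Dp L (s+1) h (j+1) ++ finRow L j) := by
        refine List.IsChain.append (chain'_Dp (s+1) hN1 h (j+1)) (chain'_finRow j) ?_
        intro x hx y hy
        cases h with
        | zero => simp [Dp] at hx
        | succ h =>
            rw [Dp_getLast?] at hx
            rw [show (finRow L j).head? = some (vtx L 0 j 1) from rfl] at hy
            rw [← Option.some_inj.mp hx, ← Option.some_inj.mp hy]
            exact (adj_U2 L 0 j).symm
      have hTDF : List.Chain' (snubHexTorusGraph L).Adj
          (topF L j (s+1) ((s:ℤ)+1) ++ (Dp L (s+1) h (j+1) ++ finRow L j)) := by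
        refine List.IsChain.append (chain'_topF j (s+1) _) hDF ?_
        intro x hx y hy
        rw [topF_getLast?] at hx
        have hx' : x = vtx L 1 j 3 := by
          have := Option.some_inj.mp hx
          rw [← this]; congr 1; push_cast; ring
        subst hx'
        cases h with
        | zero =>
            simp only [Dp, List.nil_append] at hy
            rw [show (finRow L j).head? = some (vtx L 0 j 1) from rfl] at hy
            rw [← Option.some_inj.mp hy]
            have := (adj_L L 0 j).symm
            rwa [zero_add] at this
        | succ h =>
            rw [List.head?_append, Dp_head?] at hy
            simp only [Option.or] at hy
            rw [← Option.some_inj.mp hy]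
            have := adj_U1 L 0 j
            rwa [zero_add] at this
      have hBT : List.Chain' (snubHexTorusGraph L).Adj
          (botF L j (s+1) 1 ++ (topF L j (s+1) ((s:ℤ)+1) ++ (Dp L (s+1) h (j+1) ++ finRow L j))) := by
        refine List.IsChain.append (chain'_botF j (s+1) 1) hTDF ?_
        intro x hx y hy
        rw [botF_getLast?] at hx
        rw [List.head?_append, topF_head?] at hy
        simp only [Option.or] at hy
        rw [← Option.some_inj.mp hx, ← Option.some_inj.mp hy]
        rw [show ((s:ℤ)+1) = 1+(s:ℤ) by ring]
        exact adj_hex' L (1+(s:ℤ)) j 0 1 (by decide)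
      refine List.isChain_cons.mpr ⟨?_, by exact_mod_cast hBT⟩
      intro y hy
      rw [List.head?_append, botF_head?] at hy
      simp only [Option.or] at hy
      rw [← Option.some_inj.mp hy]
      have := adj_R L 0 j
      rwa [zero_add] at this


/-! ### Lengths -/

lemma length_botF (j : ℤ) : ∀ (s : ℕ) (x : ℤ), (botF L j s x).length = 3 * s
  | 0, _ => rfl
  | s+1, x => by rw [botF]; simp [length_botF j s (x+1)]; ring

lemma length_topF (j : ℤ) : ∀ (s : ℕ) (x : ℤ), (topF L j s x).length = 3 * s
  | 0, _ => rfl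
  | s+1, x => by rw [topF]; simp [length_topF j s (x-1)]; ring

lemma length_Dp (N1 : ℕ) : ∀ (h : ℕ) (j : ℤ), (Dp L N1 h j).length = (6 * N1 + 6) * h
  | 0, _ => rfl
  | h+1, j => by
      rw [Dp]
      simp [length_botF, length_topF, length_Dp N1 h (j+1), finRow]
      ring

/-! ### Membership -/

lemma mem_botF (j : ℤ) {t : Fin 6} (ht : t = 4 ∨ t = 5 ∨ t = 0) :
    ∀ (s : ℕ) (x i : ℤ), x ≤ i → i < x + s → vtx L i j t ∈ botF L j s x
  | 0, x, i, h1, h2 => by omega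
  | s+1, x, i, h1, h2 => by
      rw [botF]
      rcases eq_or_lt_of_le h1 with rfl | hlt
      · rcases ht with rfl | rfl | rfl <;> simp
      · have := mem_botF j ht s (x+1) i (by omega) (by push_cast at h2 ⊢; omega)
        simp [this]

lemma mem_topF (j : ℤ) {t : Fin 6} (ht : t = 1 ∨ t = 2 ∨ t = 3) :
    ∀ (s : ℕ) (x i : ℤ), x - s < i → i ≤ x → vtx L i j t ∈ topF L j s x
  | 0, x, i, h1, h2 => by omega
  | s+1, x, i, h1, h2 => by
      rw [topF]
      rcases eq_or_lt_of_le h2 with rfl | hlt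
      · rcases ht with rfl | rfl | rfl <;> simp
      · have := mem_topF j ht s (x-1) i (by push_cast at h1 ⊢; omega) (by omega)
        simp [this]

lemma mem_Dp (N1 : ℕ) : ∀ (h : ℕ) (j0 : ℤ), ∀ (i j : ℤ) (t : Fin 6),
    0 ≤ i → i < (N1:ℤ) + 1 → j0 ≤ j → j < j0 + h → vtx L i j t ∈ Dp L N1 h j0
  | 0, j0, i, j, t, hi0, hi1, hj0, hj1 => by omega
  | h+1, j0, i, j, t, hi0, hi1, hj0, hj1 => by
      rw [Dp]
      rcases eq_or_lt_of_le hj0 with rfl | hlt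
      · -- row j0
        rcases eq_or_lt_of_le hi0 with rfl | hipos
        · -- cell 0
          fin_cases t
          · exact List.mem_cons_self
          all_goals
            refine List.mem_cons_of_mem _ (List.mem_append_right _ (List.mem_append_right _
              (List.mem_append_right _ ?_)))
          all_goals simp [finRow, vtx]
        · -- cells 1..N1
          have h4 : ∀ t' : Fin 6, t' = 4 ∨ t' = 5 ∨ t' = 0 →
              vtx L i j0 t' ∈ botF L j0 N1 1 := fun t' ht' =>
            mem_botF j0 ht' N1 1 i (by omega) (by omega)
          have h1 : ∀ t' : Fin 6, t' = 1 ∨ t' = 2 ∨ t' = 3 →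
              vtx L i j0 t' ∈ topF L j0 N1 (N1:ℤ) := fun t' ht' =>
            mem_topF j0 ht' N1 (N1:ℤ) i (by omega) (by omega)
          fin_cases t
          · exact List.mem_cons_of_mem _ (List.mem_append_left _ (h4 0 (by simp)))
          · exact List.mem_cons_of_mem _ (List.mem_append_right _ (List.mem_append_left _ (h1 1 (by simp))))
          · exact List.mem_cons_of_mem _ (List.mem_append_right _ (List.mem_append_left _ (h1 2 (by simp))))
          · exact List.mem_cons_of_mem _ (List.mem_append_right _ (List.mem_append_left _ (h1 3 (by simp))))
          · exact List.mem_cons_of_mem _ (List.mem_append_left _ (h4 4 (by simp)))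
          · exact List.mem_cons_of_mem _ (List.mem_append_left _ (h4 5 (by simp)))
      · -- rows above
        have := mem_Dp N1 h (j0+1) i j t hi0 hi1 (by omega) (by push_cast at hj1 ⊢; omega)
        exact List.mem_cons_of_mem _ (List.mem_append_right _ (List.mem_append_right _
          (List.mem_append_left _ this)))

end Lists

/-! ## Generic: Hamiltonian cycle from a list -/

section Generic
variable {α : Type*} (G : SimpleGraph α)

def walkOfChain : (a : α) → (l : List α) → List.Chain G.Adj a l →
    G.Walk a ((a :: l).getLast (List.cons_ne_nil a l))
  | _, [], _ => SimpleGraph.Walk.nil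
  | a, b :: l, h =>
      (SimpleGraph.Walk.cons (List.chain_cons.mp h).1
        (walkOfChain b l (List.chain_cons.mp h).2)).copy rfl
        (List.getLast_cons (List.cons_ne_nil b l)).symm

lemma walkOfChain_support : ∀ (a : α) (l : List α) (h : List.Chain G.Adj a l),
    (walkOfChain G a l h).support = a :: l
  | _, [], _ => rfl
  | a, b :: l, h => by
      rw [walkOfChain, SimpleGraph.Walk.support_copy, SimpleGraph.Walk.support_cons,
        walkOfChain_support b l (List.chain_cons.mp h).2]

lemma walkOfChain_edges (a b : α) (l : List α) (h : List.Chain G.Adj a (b :: l)) :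
    (walkOfChain G a (b :: l) h).edges
      = s(a, b) :: (walkOfChain G b l (List.chain_cons.mp h).2).edges := by
  rw [walkOfChain, SimpleGraph.Walk.edges_copy, SimpleGraph.Walk.edges_cons]

lemma hamiltonian_of_cycle_list [Fintype α] (a z : α) (l : List α)
    (hchain : List.Chain G.Adj a l)
    (hne : l ≠ [])
    (hlastv : (a :: l).getLast (List.cons_ne_nil a l) = z)
    (hclose : G.Adj z a)
    (hhead : ∀ c, l.head? = some c → c ≠ z)
    (hnd : (a :: l).Nodup)
    (hcov : ∀ v, v ∈ a :: l) : G.Hamiltonian := by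
  classical
  obtain ⟨b, l', rfl⟩ : ∃ b l', l = b :: l' := by
    cases l with
    | nil => exact absurd rfl hne
    | cons b l' => exact ⟨b, l', rfl⟩
  set P := walkOfChain G a (b :: l') hchain with hP
  have hsup : P.support = a :: b :: l' := walkOfChain_support G _ _ _
  -- view P as a walk to z
  let P' : G.Walk a z := P.copy rfl hlastv
  have hsup' : P'.support = a :: b :: l' := by rw [SimpleGraph.Walk.support_copy, hsup]
  have hedges' : P'.edges = s(a, b) :: (walkOfChain G b l' (List.chain_cons.mp hchain).2).edges := by
    rw [SimpleGraph.Walk.edges_copy, hP, walkOfChain_edges]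
  have hbz : b ≠ z := hhead b rfl
  have haz : a ≠ z := by
    intro h
    have : a ∈ b :: l' := by
      have h2 := List.getLast_mem (List.cons_ne_nil b l')
      rw [← List.getLast_cons (List.cons_ne_nil b l') (a := a), hlastv, ← h] at h2
      exact h2
    exact (List.nodup_cons.mp hnd).1 this
  have hcyc : (SimpleGraph.Walk.cons hclose P').IsCycle := by
    rw [SimpleGraph.Walk.cons_isCycle_iff]
    refine ⟨SimpleGraph.Walk.IsPath.mk' (by rw [hsup']; exact hnd), ?_⟩
    intro hmem
    rw [hedges'] at hmem
    rcases List.mem_cons.mp hmem with heq | hmem'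
    · rcases Sym2.eq_iff.mp heq with ⟨h1, _⟩ | ⟨h1, _⟩
      · exact haz h1.symm
      · exact hbz h1.symm
    · have : a ∈ (walkOfChain G b l' (List.chain_cons.mp hchain).2).support :=
        SimpleGraph.Walk.snd_mem_support_of_mem_edges _ hmem'
      replace this := (congrArg (a ∈ ·) (walkOfChain_support G b l' _)).mp this
      exact (List.nodup_cons.mp hnd).1 this
  refine ⟨z, SimpleGraph.Walk.cons hclose P', hcyc, ?_⟩
  intro v
  rw [SimpleGraph.Walk.support_cons, hsup']
  exact List.mem_cons_of_mem _ (hcov v)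

end Generic

end SnubHexHam

/-! ## Arithmetic extraction -/

lemma dvd_small_eq_zero {w c : ℤ} (hw : 0 < w) (hdvd : w ∣ c) (h1 : -w < c) (h2 : c < w) :
    c = 0 := by
  by_contra hc
  have h3 : w ≤ |c| := Int.le_of_dvd (abs_pos.mpr hc) ((dvd_abs w c).mpr hdvd)
  have := abs_lt.mpr ⟨h1, h2⟩
  omega

lemma exists_params (L : AddSubgroup (ℤ × ℤ)) (hL : Admissible L) :
    ∃ (N M : ℕ) (k : ℤ), 2 ≤ N ∧ 1 ≤ M ∧
      (((N:ℤ), (0:ℤ)) ∈ L) ∧ ((k, (M:ℤ)) ∈ L) ∧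
      (∀ a : ℤ, ((a, (0:ℤ)) ∈ L) → (N:ℤ) ∣ a) ∧
      (∀ p : ℤ × ℤ, p ∈ L → (M:ℤ) ∣ p.2) := by
  have hfin : Finite ((ℤ × ℤ) ⧸ L) := hL.1
  -- horizontal axis
  obtain ⟨g, hg⟩ := Int.subgroup_cyclic (AddSubgroup.comap (AddMonoidHom.inl ℤ ℤ) L)
  have hgmem : ∀ a : ℤ, (a, (0:ℤ)) ∈ L ↔ g ∣ a := by
    intro a
    have : (a, (0:ℤ)) ∈ L ↔ a ∈ AddSubgroup.comap (AddMonoidHom.inl ℤ ℤ) L := by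
      simp [AddSubgroup.mem_comap, AddMonoidHom.inl]
    rw [this, hg, AddSubgroup.mem_closure_singleton]
    constructor
    · rintro ⟨n, rfl⟩; exact ⟨n, by rw [mul_comm]; simp [smul_eq_mul]⟩
    · rintro ⟨n, rfl⟩; exact ⟨n, by simp [smul_eq_mul, mul_comm]⟩
  have hgne : g ≠ 0 := by
    obtain ⟨x, y, hxy, hfxy⟩ := Finite.exists_ne_map_eq_of_infinite
      (fun a : ℤ => (QuotientAddGroup.mk (a, (0:ℤ)) : (ℤ × ℤ) ⧸ L))
    have : (-x + y, (0:ℤ)) ∈ L := by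
      have := QuotientAddGroup.eq.mp hfxy
      simpa using this
    intro hg0
    rw [hgmem, hg0] at this
    simp at this
    omega
  -- vertical projection
  obtain ⟨g2, hg2⟩ := Int.subgroup_cyclic (AddSubgroup.map (AddMonoidHom.snd ℤ ℤ) L)
  have hg2mem : ∀ b : ℤ, (∃ a : ℤ, (a, b) ∈ L) ↔ g2 ∣ b := by
    intro b
    have : (∃ a : ℤ, (a, b) ∈ L) ↔ b ∈ AddSubgroup.map (AddMonoidHom.snd ℤ ℤ) L := by
      constructor
      · rintro ⟨a, ha⟩; exact ⟨(a, b), ha, rfl⟩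
      · rintro ⟨⟨a, b'⟩, hab, hb⟩
        exact ⟨a, by simpa [AddMonoidHom.snd] using hb ▸ hab⟩
    rw [this, hg2, AddSubgroup.mem_closure_singleton]
    constructor
    · rintro ⟨n, rfl⟩; exact ⟨n, by rw [mul_comm]; simp [smul_eq_mul]⟩
    · rintro ⟨n, rfl⟩; exact ⟨n, by simp [smul_eq_mul, mul_comm]⟩
  have hg2ne : g2 ≠ 0 := by
    obtain ⟨x, y, hxy, hfxy⟩ := Finite.exists_ne_map_eq_of_infinite
      (fun b : ℤ => (QuotientAddGroup.mk ((0:ℤ), b) : (ℤ × ℤ) ⧸ L))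
    have : ((0:ℤ), -x + y) ∈ L := by
      have := QuotientAddGroup.eq.mp hfxy
      simpa using this
    intro hg0
    have := (hg2mem (-x + y)).mp ⟨0, this⟩
    rw [hg0] at this
    simp at this
    omega
  have hNmem : ((g.natAbs : ℤ), (0:ℤ)) ∈ L := (hgmem _).mpr (Int.dvd_natAbs.mpr dvd_rfl)
  have hMdvd : ∀ p : ℤ × ℤ, p ∈ L → (g2.natAbs : ℤ) ∣ p.2 := by
    intro p hp
    exact Int.natAbs_dvd.mpr ((hg2mem p.2).mp ⟨p.1, by simpa using hp⟩)
  obtain ⟨kk, hkk⟩ : ∃ a : ℤ, (a, (g2.natAbs : ℤ)) ∈ L :=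
    (hg2mem _).mpr (Int.dvd_natAbs.mpr dvd_rfl)
  have hNdvd : ∀ a : ℤ, ((a, (0:ℤ)) ∈ L) → ((g.natAbs : ℤ)) ∣ a := by
    intro a ha
    exact Int.natAbs_dvd.mpr ((hgmem a).mp ha)
  have hM1 : 1 ≤ g2.natAbs := by
    rcases Nat.eq_zero_or_pos g2.natAbs with h | h
    · exact absurd (Int.natAbs_eq_zero.mp h) hg2ne
    · exact h
  have hN2 : 2 ≤ g.natAbs := by
    rcases Nat.lt_or_ge g.natAbs 2 with h | h
    · interval_cases hna : g.natAbs
      · exact absurd (Int.natAbs_eq_zero.mp hna) hgne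
      · exact absurd (hL.2 (1, 0) (by exact_mod_cast hNmem) (by decide)) (by norm_num)
    · exact h
  exact ⟨g.natAbs, g2.natAbs, kk, hN2, hM1, hNmem, hkk, hNdvd, hMdvd⟩


open SnubHexHam

/-- Every snub-hexagonal torus graph (type `{3⁴,6}`) is Hamiltonian. -/
theorem snubHexTorusGraph_hamiltonian (L : AddSubgroup (ℤ × ℤ)) (hL : Admissible L) :
    (snubHexTorusGraph L).Hamiltonian := by
  classical
  obtain ⟨N, M, k, hN2, hM1, hNmem, hkM, hNdvd, hMdvd⟩ := exists_params L hL
  have hfin : Finite ((ℤ × ℤ) ⧸ L) := hL.1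
  haveI : Fintype ((ℤ × ℤ) ⧸ L) := Fintype.ofFinite _
  obtain ⟨N1, hN1⟩ : ∃ N1, N = N1 + 1 := ⟨N - 1, by omega⟩
  obtain ⟨M', rfl⟩ : ∃ M', M = M' + 1 := ⟨M - 1, by omega⟩
  have hN1pos : 1 ≤ N1 := by omega
  -- injectivity of representatives
  have hinj : ∀ i j i' j' : ℤ, 0 ≤ i → i < N → 0 ≤ j → j < (M'+1 : ℕ) →
      0 ≤ i' → i' < N → 0 ≤ j' → j' < (M'+1 : ℕ) →
      (QuotientAddGroup.mk (i, j) : (ℤ × ℤ) ⧸ L) = QuotientAddGroup.mk (i', j') →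
      i = i' ∧ j = j' := by
    intro i j i' j' hi0 hiN hj0 hjM hi'0 hi'N hj'0 hj'M heq
    have hmem : ((i' - i, j' - j) : ℤ × ℤ) ∈ L := by
      have := QuotientAddGroup.eq.mp heq
      have h2 : (-(i, j) + (i', j') : ℤ × ℤ) = (i' - i, j' - j) := by
        simp [Prod.ext_iff]; constructor <;> ring
      rwa [h2] at this
    have hj : j' - j = 0 := by
      have hd := hMdvd _ hmem
      exact dvd_small_eq_zero (by positivity) hd (by omega) (by omega)
    have hmem2 : ((i' - i, (0:ℤ)) : ℤ × ℤ) ∈ L := by rwa [hj] at hmem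
    have hi : i' - i = 0 := by
      refine dvd_small_eq_zero (by exact_mod_cast (by omega : 0 < N)) (hNdvd _ hmem2) (by omega) (by omega)
    constructor <;> omega
  -- representatives exist
  have hrep : ∀ q : (ℤ × ℤ) ⧸ L, ∃ i j : ℤ, 0 ≤ i ∧ i < N ∧ 0 ≤ j ∧ j < (M'+1:ℕ) ∧
      (QuotientAddGroup.mk (i, j) : (ℤ × ℤ) ⧸ L) = q := by
    intro q
    induction q using QuotientAddGroup.induction_on with
    | H p =>
      obtain ⟨a, b⟩ := p
      set Mz : ℤ := ((M'+1:ℕ) : ℤ) with hMz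
      set Nz : ℤ := ((N:ℕ) : ℤ) with hNz
      have hMzpos : 0 < Mz := by positivity
      have hNzpos : 0 < Nz := by simp [hNz]; omega
      set q2 : ℤ := b / Mz with hq2
      set j : ℤ := b % Mz with hj
      set ss : ℤ := (a - q2 * k) / Nz with hss
      set i : ℤ := (a - q2 * k) % Nz with hi
      refine ⟨i, j, Int.emod_nonneg _ (by omega), by rw [hi]; exact Int.emod_lt_of_pos _ hNzpos,
        Int.emod_nonneg _ (by omega), by rw [hj]; exact Int.emod_lt_of_pos _ hMzpos, ?_⟩
      rw [QuotientAddGroup.eq]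
      have hkey : (-(i, j) + (a, b) : ℤ × ℤ) = q2 • ((k, (Mz:ℤ))) + ss • ((Nz, (0:ℤ))) := by
        have e1 : a - i = q2 * k + Nz * ss := by
          rw [hi, Int.emod_def]; ring
        have e2 : b - j = Mz * q2 := by
          rw [hj, Int.emod_def, hq2]; ring
        simp only [Prod.ext_iff, Prod.fst_add, Prod.snd_add, Prod.smul_mk, smul_eq_mul,
          Prod.fst_neg, Prod.snd_neg, Prod.fst_add]
        constructor
        · show -i + a = q2 * k + ss * Nz
          linear_combination e1
        · show -j + b = q2 * Mz + ss * 0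
          linear_combination e2
      rw [hkey]
      exact AddSubgroup.add_mem _ (AddSubgroup.zsmul_mem _ hkM q2) (AddSubgroup.zsmul_mem _ hNmem ss)
  -- the cycle list
  set lst := Dp L N1 (M'+1) 0 with hlst
  -- coverage
  have hcov : ∀ v : SnubHexHam.V L, v ∈ lst := by
    rintro ⟨q, t⟩
    obtain ⟨i, j, hi0, hiN, hj0, hjM, hq⟩ := hrep q
    have : vtx L i j t = (q, t) := by rw [vtx, hq]
    rw [← this]
    refine mem_Dp N1 (M'+1) 0 i j t hi0 ?_ hj0 ?_
    · have hcast : ((N:ℕ):ℤ) = (N1:ℤ)+1 := by exact_mod_cast hN1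
      omega
    · simpa using hjM
  -- cardinality
  have hcardQ : Fintype.card ((ℤ × ℤ) ⧸ L) = N * (M'+1) := by
    have e : Fin N × Fin (M'+1) ≃ (ℤ × ℤ) ⧸ L := by
      refine Equiv.ofBijective (fun p => QuotientAddGroup.mk ((p.1 : ℤ), (p.2 : ℤ))) ⟨?_, ?_⟩
      · rintro ⟨i, j⟩ ⟨i', j'⟩ h
        have := hinj i j i' j' (by positivity) (by exact_mod_cast i.isLt) (by positivity)
          (by exact_mod_cast j.isLt) (by positivity) (by exact_mod_cast i'.isLt) (by positivity)
          (by exact_mod_cast j'.isLt) h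
        have hii : (i : ℕ) = (i' : ℕ) := by exact_mod_cast this.1
        have hjj : (j : ℕ) = (j' : ℕ) := by exact_mod_cast this.2
        simp [Prod.ext_iff, Fin.ext_iff, hii, hjj]
      · intro q
        obtain ⟨i, j, hi0, hiN, hj0, hjM, hq⟩ := hrep q
        refine ⟨(⟨i.toNat, ?_⟩, ⟨j.toNat, ?_⟩), ?_⟩
        · omega
        · omega
        · rw [← hq]
          have hpair : ((i.toNat : ℤ), (j.toNat : ℤ)) = (i, j) := by
            simp only [Prod.ext_iff]
            constructor <;> omega
          simp only [hpair]
    rw [← Fintype.card_congr e, Fintype.card_prod, Fintype.card_fin, Fintype.card_fin]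
  have hcardV : Fintype.card (SnubHexHam.V L) = 6 * N * (M'+1) := by
    rw [Fintype.card_prod, hcardQ, Fintype.card_fin]
    ring
  -- length
  have hlen : lst.length = 6 * N * (M'+1) := by
    rw [hlst, length_Dp]
    have : 6 * N1 + 6 = 6 * N := by omega
    rw [this]
  -- nodup
  have hnd : lst.Nodup := by
    have hsubl : List.Sublist lst.dedup lst := lst.dedup_sublist
    have hcovd : ∀ v, v ∈ lst.dedup := fun v => (List.mem_dedup).mpr (hcov v)
    have huniv : lst.dedup.toFinset = Finset.univ :=
      Finset.eq_univ_iff_forall.mpr (by intro v; simp [hcovd v])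
    have h1 : Fintype.card (SnubHexHam.V L) ≤ lst.dedup.length := by
      calc Fintype.card (SnubHexHam.V L) = lst.dedup.toFinset.card := by
              rw [huniv, Finset.card_univ]
        _ = lst.dedup.dedup.length := List.card_toFinset _
        _ = lst.dedup.length := by rw [List.dedup_eq_self.mpr lst.nodup_dedup]
        _ ≤ lst.dedup.length := le_rfl
    have h2 : lst.dedup.length ≤ lst.length := hsubl.length_le
    have h3 : lst.dedup.length = lst.length := by omega
    exact List.dedup_eq_self.mp (hsubl.eq_of_length h3)
  -- decompose
  have hlstdef : lst = vtx L 0 0 0 ::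
      (botF L 0 N1 1 ++ (topF L 0 N1 (N1 : ℤ) ++ (Dp L N1 M' (0+1) ++ finRow L 0))) := by
    rw [hlst, Dp]
  set rest := botF L 0 N1 1 ++ (topF L 0 N1 (N1 : ℤ) ++ (Dp L N1 M' (0+1) ++ finRow L 0)) with hrest
  have hchain' : List.Chain' (snubHexTorusGraph L).Adj (vtx L 0 0 0 :: rest) := by
    rw [← hlstdef, hlst]
    exact chain'_Dp N1 hN1pos (M'+1) 0
  have hchain : List.Chain (snubHexTorusGraph L).Adj (vtx L 0 0 0) rest := hchain'
  have hne : rest ≠ [] := by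
    rw [hrest]
    simp [finRow]
  have hlastv : (vtx L 0 0 0 :: rest).getLast (List.cons_ne_nil _ _) = vtx L 0 0 5 := by
    have h1 : lst.getLast? = some (vtx L 0 0 5) := by rw [hlst]; exact Dp_getLast? N1 M' 0
    rw [hlstdef] at h1
    rwa [List.getLast?_eq_getLast (List.cons_ne_nil _ _), Option.some_inj] at h1
  have hhead : ∀ c, rest.head? = some c → c ≠ vtx L 0 0 5 := by
    intro c hc
    obtain ⟨s', rfl⟩ : ∃ s', N1 = s' + 1 := ⟨N1 - 1, by omega⟩
    rw [hrest, List.head?_append, botF_head?] at hc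
    simp only [Option.or] at hc
    rw [← Option.some_inj.mp hc]
    exact vtx_ne_of_t L (by decide)
  have hcov' : ∀ v, v ∈ vtx L 0 0 0 :: rest := by rw [← hlstdef]; exact hcov
  have hnd' : (vtx L 0 0 0 :: rest).Nodup := by rw [← hlstdef]; exact hnd
  exact hamiltonian_of_cycle_list (snubHexTorusGraph L) (vtx L 0 0 0) (vtx L 0 0 5) rest
    hchain hne hlastv (adj_hex' L 0 0 5 0 (by decide)) hhead hnd' hcov'
end

section
/- For every admissible subgroup L of ℤ × ℤ, the truncated-square torus graph G(L) — the edge graph of the semi-equivelar map of type {4,8,8} on the torus determined by L — is Hamiltonian. -/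
/-- The edge relation of the truncated-square graph over an abelian group `A`
(second coordinates are taken mod 4). -/
def truncSquareRel {A : Type*} [AddCommGroup A] (E₁ E₂ : A) :
    A × Fin 4 → A × Fin 4 → Prop := fun u v =>
  (∃ (x : A) (i : Fin 4), u = (x, i) ∧ v = (x, i + 1)) ∨
  (∃ x : A, u = (x, 0) ∧ v = (x + E₁, 2)) ∨
  (∃ x : A, u = (x, 1) ∧ v = (x + E₂, 3))

/-- The truncated-square graph over an abelian group `A`. -/
def truncSquareGraph {A : Type*} [AddCommGroup A] (E₁ E₂ : A) : SimpleGraph (A × Fin 4) :=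
  SimpleGraph.fromRel (truncSquareRel E₁ E₂)

/-- The truncated-square torus graph `G(L)`, the edge graph of the semi-equivelar map of
type `{4,8,8}` on the torus determined by `L`. -/
def truncSquareTorusGraph (L : AddSubgroup (ℤ × ℤ)) :
    SimpleGraph (((ℤ × ℤ) ⧸ L) × Fin 4) :=
  truncSquareGraph (QuotientAddGroup.mk e₁) (QuotientAddGroup.mk e₂)

section Main

variable {A : Type*} [AddCommGroup A] {M : ℕ}

/-- marked squares -/
def marked (ι : A →+ ZMod M) (a : A) (y : A) : Prop := ι y ≠ 0 ∧ y = (ι y).val • a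

open scoped Classical in
noncomputable def NEXT (a b : A) (ι : A →+ ZMod M) : A × Fin 4 → A × Fin 4 := fun v =>
  let y := v.1
  if v.2 = 0 then
    (if Even (ι y).val then (y + a, 2) else if marked ι a y then (y, 1) else (y, 3))
  else if v.2 = 1 then
    (if Even ((ι y) - 1).val then (y + b, 3) else if marked ι a y then (y, 0) else (y, 2))
  else if v.2 = 2 then
    (if Even ((ι y) - 1).val then (if marked ι a y then (y, 3) else (y, 1)) else (y - a, 0))
  else
    (if Even (ι y).val then (if marked ι a y then (y, 2) else (y, 0)) else (y - b, 1))

open scoped Classical in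
noncomputable def PREV (a b : A) (ι : A →+ ZMod M) : A × Fin 4 → A × Fin 4 := fun v =>
  let y := v.1
  if v.2 = 0 then
    (if Even (ι y).val then (if marked ι a y then (y, 1) else (y, 3)) else (y + a, 2))
  else if v.2 = 1 then
    (if Even ((ι y) - 1).val then (if marked ι a y then (y, 0) else (y, 2)) else (y + b, 3))
  else if v.2 = 2 then
    (if Even ((ι y) - 1).val then (y - a, 0) else if marked ι a y then (y, 3) else (y, 1))
  else
    (if Even (ι y).val then (y - b, 1) else if marked ι a y then (y, 2) else (y, 0))

open scoped Classical

variable (a b : A) (ι : A →+ ZMod M)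

lemma NEXT_zero (y : A) : NEXT a b ι (y, 0) =
    (if Even (ι y).val then (y + a, 2) else if marked ι a y then (y, 1) else (y, 3)) := by
  simp [NEXT]

lemma NEXT_one (y : A) : NEXT a b ι (y, 1) =
    (if Even ((ι y) - 1).val then (y + b, 3) else if marked ι a y then (y, 0) else (y, 2)) := by
  simp [NEXT]

lemma NEXT_two (y : A) : NEXT a b ι (y, 2) =
    (if Even ((ι y) - 1).val then (if marked ι a y then (y, 3) else (y, 1)) else (y - a, 0)) := by
  simp [NEXT]

lemma NEXT_three (y : A) : NEXT a b ι (y, 3) =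
    (if Even (ι y).val then (if marked ι a y then (y, 2) else (y, 0)) else (y - b, 1)) := by
  simp [NEXT]

lemma PREV_zero (y : A) : PREV a b ι (y, 0) =
    (if Even (ι y).val then (if marked ι a y then (y, 1) else (y, 3)) else (y + a, 2)) := by
  simp [PREV]

lemma PREV_one (y : A) : PREV a b ι (y, 1) =
    (if Even ((ι y) - 1).val then (if marked ι a y then (y, 0) else (y, 2)) else (y + b, 3)) := by
  simp [PREV]

lemma PREV_two (y : A) : PREV a b ι (y, 2) =
    (if Even ((ι y) - 1).val then (y - a, 0) else if marked ι a y then (y, 3) else (y, 1)) := by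
  simp [PREV]

lemma PREV_three (y : A) : PREV a b ι (y, 3) =
    (if Even (ι y).val then (y - b, 1) else if marked ι a y then (y, 2) else (y, 0)) := by
  simp [PREV]

variable [NeZero M]

lemma val_pos_of_ne_zero {x : ZMod M} (hx : x ≠ 0) : 1 ≤ x.val :=
  Nat.pos_of_ne_zero (fun h => hx ((ZMod.val_eq_zero x).mp h))

lemma val_sub_one_of_ne_zero {x : ZMod M} (hx : x ≠ 0) : (x - 1).val = x.val - 1 := by
  have h1 : 1 ≤ x.val := val_pos_of_ne_zero hx
  have hlt : x.val - 1 < M := lt_of_le_of_lt (Nat.sub_le _ _) (ZMod.val_lt x)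
  have : ((x.val - 1 : ℕ) : ZMod M) = x - 1 := by
    rw [Nat.cast_sub h1, Nat.cast_one, ZMod.natCast_val, ZMod.cast_id]
  rw [← this, ZMod.val_cast_of_lt hlt]

lemma parity_flip {x : ZMod M} (hx : x ≠ 0) : Even ((x - 1).val) ↔ ¬ Even x.val := by
  rw [val_sub_one_of_ne_zero hx, Nat.even_sub (val_pos_of_ne_zero hx)]
  simp [Nat.not_even_iff, Nat.even_iff]

variable (hia : ι a = 1) (hib : ι b = -1)

include hia in
lemma iota_add_a (y : A) : ι (y + a) = ι y + 1 := by rw [map_add, hia]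

include hib in
lemma iota_add_b (y : A) : ι (y + b) = ι y - 1 := by rw [map_add, hib]; ring

include hia in
lemma iota_sub_a (y : A) : ι (y - a) = ι y - 1 := by rw [map_sub, hia]

include hib in
lemma iota_sub_b (y : A) : ι (y - b) = ι y + 1 := by rw [map_sub, hib]; ring

include hia hib in
lemma prev_next (v : A × Fin 4) : PREV a b ι (NEXT a b ι v) = v := by
  obtain ⟨y, i⟩ := v
  fin_cases i
  · -- i = 0
    show PREV a b ι (NEXT a b ι (y, 0)) = (y, 0)
    rw [NEXT_zero]
    by_cases hE : Even (ι y).val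
    · rw [if_pos hE, PREV_two]
      have h1 : ι (y + a) - 1 = ι y := by rw [iota_add_a a ι hia]; ring
      rw [h1, if_pos hE]
      simp
    · rw [if_neg hE]
      by_cases hm : marked ι a y
      · rw [if_pos hm, PREV_one]
        have hx : ι y ≠ 0 := hm.1
        have hE1 : Even ((ι y) - 1).val := by rw [parity_flip hx]; exact hE
        rw [if_pos hE1, if_pos hm]
      · rw [if_neg hm, PREV_three, if_neg hE, if_neg hm]
  · -- i = 1
    show PREV a b ι (NEXT a b ι (y, 1)) = (y, 1)
    rw [NEXT_one]
    by_cases hE : Even ((ι y) - 1).val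
    · rw [if_pos hE, PREV_three]
      have h1 : ι (y + b) = ι y - 1 := iota_add_b b ι hib y
      rw [h1, if_pos hE]
      simp
    · rw [if_neg hE]
      by_cases hm : marked ι a y
      · rw [if_pos hm, PREV_zero]
        have hx : ι y ≠ 0 := hm.1
        have hE0 : Even (ι y).val := by
          by_contra h
          exact hE ((parity_flip hx).mpr h)
        rw [if_pos hE0, if_pos hm]
      · rw [if_neg hm, PREV_two, if_neg hE, if_neg hm]
  · -- i = 2
    show PREV a b ι (NEXT a b ι (y, 2)) = (y, 2)
    rw [NEXT_two]
    by_cases hE : Even ((ι y) - 1).val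
    · rw [if_pos hE]
      by_cases hm : marked ι a y
      · rw [if_pos hm, PREV_three]
        have hx : ι y ≠ 0 := hm.1
        have hE0 : ¬ Even (ι y).val := (parity_flip hx).mp hE
        rw [if_neg hE0, if_pos hm]
      · rw [if_neg hm, PREV_one, if_pos hE, if_neg hm]
    · rw [if_neg hE, PREV_zero]
      have h1 : ι (y - a) = ι y - 1 := iota_sub_a a ι hia y
      have h2 : ¬ Even (ι (y - a)).val := by rw [h1]; exact hE
      rw [if_neg h2]
      simp
  · -- i = 3
    show PREV a b ι (NEXT a b ι (y, 3)) = (y, 3)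
    rw [NEXT_three]
    by_cases hE : Even (ι y).val
    · rw [if_pos hE]
      by_cases hm : marked ι a y
      · rw [if_pos hm, PREV_two]
        have hx : ι y ≠ 0 := hm.1
        have hE1 : ¬ Even ((ι y) - 1).val := by
          rw [parity_flip hx]; simpa using hE
        rw [if_neg hE1, if_pos hm]
      · rw [if_neg hm, PREV_zero, if_pos hE, if_neg hm]
    · rw [if_neg hE, PREV_one]
      have h1 : ι (y - b) - 1 = ι y := by rw [iota_sub_b b ι hib]; ring
      have h2 : ¬ Even (ι (y - b) - 1).val := by rw [h1]; exact hE
      rw [if_neg h2]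
      simp
section SC

variable (f : Equiv.Perm (A × Fin 4)) (hf : ∀ v, f v = NEXT a b ι v)

include hf in
lemma sc_of_next {v w : A × Fin 4} (h : NEXT a b ι v = w) : f.SameCycle v w :=
  ⟨1, by rw [zpow_one, hf, h]⟩

include hf hia in
lemma sc1 (y : A) : f.SameCycle (y, 0) (y + a, 2) := by
  by_cases hE : Even (ι y).val
  · exact sc_of_next a b ι f hf (by rw [NEXT_zero, if_pos hE])
  · refine (sc_of_next a b ι f hf ?_).symm
    rw [NEXT_two]
    have h1 : ι (y + a) - 1 = ι y := by rw [iota_add_a a ι hia]; ring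
    rw [h1, if_neg hE]
    simp
include hf hib in
lemma sc2 (y : A) : f.SameCycle (y, 1) (y + b, 3) := by
  by_cases hE : Even ((ι y) - 1).val
  · exact sc_of_next a b ι f hf (by rw [NEXT_one, if_pos hE])
  · refine (sc_of_next a b ι f hf ?_).symm
    rw [NEXT_three]
    have h1 : ι (y + b) = ι y - 1 := iota_add_b b ι hib y
    rw [h1, if_neg hE]
    simp

include b hf in
lemma sc3 (y : A) (hm : ¬ marked ι a y) : f.SameCycle (y, 1) (y, 2) := by
  by_cases hE : Even ((ι y) - 1).val
  · exact (sc_of_next a b ι f hf (by rw [NEXT_two, if_pos hE, if_neg hm])).symm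
  · exact sc_of_next a b ι f hf (by rw [NEXT_one, if_neg hE, if_neg hm])

include b hf in
lemma sc4 (y : A) (hm : ¬ marked ι a y) : f.SameCycle (y, 3) (y, 0) := by
  by_cases hE : Even (ι y).val
  · exact sc_of_next a b ι f hf (by rw [NEXT_three, if_pos hE, if_neg hm])
  · exact (sc_of_next a b ι f hf (by rw [NEXT_zero, if_neg hE, if_neg hm])).symm

include b hf in
lemma sc5 (y : A) (hm : marked ι a y) : f.SameCycle (y, 2) (y, 3) := by
  by_cases hE : Even ((ι y) - 1).val
  · exact sc_of_next a b ι f hf (by rw [NEXT_two, if_pos hE, if_pos hm])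
  · have hE0 : Even (ι y).val := by
      by_contra h
      exact hE ((parity_flip hm.1).mpr h)
    exact (sc_of_next a b ι f hf (by rw [NEXT_three, if_pos hE0, if_pos hm])).symm

include b hf in
lemma sc6 (y : A) (hm : marked ι a y) : f.SameCycle (y, 0) (y, 1) := by
  by_cases hE : Even (ι y).val
  · have hE1 : ¬ Even ((ι y) - 1).val := by
      rw [parity_flip hm.1]; simpa using hE
    exact (sc_of_next a b ι f hf (by rw [NEXT_one, if_neg hE1, if_pos hm])).symm
  · exact sc_of_next a b ι f hf (by rw [NEXT_zero, if_neg hE, if_pos hm])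

include hia hib hf in
lemma sc_chain (y : A) (h1 : ¬ marked ι a (y + a)) (h2 : ¬ marked ι a (y + a + b)) :
    f.SameCycle (y, 0) (y + a + b, 0) :=
  (((sc1 a b ι hia f hf y).trans
    (sc3 a b ι f hf (y + a) h1).symm).trans
    (sc2 a b ι hib f hf (y + a))).trans
    (sc4 a b ι f hf (y + a + b) h2)

include hia hib in
lemma iota_d : ι (a + b) = 0 := by rw [map_add, hia, hib]; ring

include hia hib in
lemma iota_form (j k : ℕ) : ι (j • a + k • (a + b)) = (j : ZMod M) := by
  rw [map_add, map_nsmul, map_nsmul, hia, iota_d a b ι hia hib]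
  simp

include hia hib in
lemma markedIff (j k : ℕ) (hj : j < M) :
    marked ι a ((j • a) + k • (a + b)) ↔ (j ≠ 0 ∧ k • (a + b) = 0) := by
  unfold marked
  rw [iota_form a b ι hia hib, ZMod.val_natCast_of_lt hj]
  constructor
  · rintro ⟨h1, h2⟩
    refine ⟨?_, ?_⟩
    · intro h; apply h1; rw [h]; simp
    · exact (add_eq_left).mp h2
  · rintro ⟨h1, h2⟩
    refine ⟨?_, ?_⟩
    · intro h
      rw [ZMod.natCast_eq_zero_iff] at h
      exact h1 (Nat.eq_zero_of_dvd_of_lt h hj)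
    · rw [h2]; simp

lemma unmarked_of_iota_zero (y : A) (h : ι y = 0) : ¬ marked ι a y := fun hm => hm.1 h

end SC

section Conn

variable (f : Equiv.Perm (A × Fin 4)) (hf : ∀ v, f v = NEXT a b ι v)

include hia in
lemma decomp (hker : ∀ y : A, ι y = 0 → ∃ k : ℕ, y = k • (a + b)) :
    ∀ y : A, ∃ k : ℕ, y = (ι y).val • a + k • (a + b) := by
  intro y
  have h0 : ι (y - (ι y).val • a) = 0 := by
    rw [map_sub, map_nsmul, hia, nsmul_eq_mul, mul_one, ZMod.natCast_val, ZMod.cast_id, sub_self]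
  obtain ⟨k, hk⟩ := hker _ h0
  exact ⟨k, by rw [← hk]; abel⟩

include hia hib hf in
lemma chain_up (j k : ℕ) (hj : j < M) (h1 : j + 1 = M ∨ k • (a + b) ≠ 0)
    (h2 : j = 0 ∨ (k + 1) • (a + b) ≠ 0) :
    f.SameCycle (j • a + k • (a + b), 0) (j • a + (k + 1) • (a + b), 0) := by
  have e1 : (j • a + k • (a + b)) + a = (j + 1) • a + k • (a + b) := by
    rw [succ_nsmul]; abel
  have e2 : (j • a + k • (a + b)) + a + b = j • a + (k + 1) • (a + b) := by
    rw [succ_nsmul (a + b) k]; abel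
  have u1 : ¬ marked ι a ((j • a + k • (a + b)) + a) := by
    rw [e1]
    rcases h1 with h1 | h1
    · apply unmarked_of_iota_zero
      rw [iota_form a b ι hia hib, h1, ZMod.natCast_self]
    · intro hm
      rcases Nat.lt_or_ge (j+1) M with hlt | hge
      · exact h1 ((markedIff a b ι hia hib (j+1) k hlt).mp hm).2
      · have : j + 1 = M := by omega
        exact hm.1 (by rw [iota_form a b ι hia hib, this, ZMod.natCast_self])
  have u2 : ¬ marked ι a ((j • a + k • (a + b)) + a + b) := by
    rw [e2]
    intro hm
    obtain ⟨hj0, hk0⟩ := (markedIff a b ι hia hib j (k+1) hj).mp hm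
    rcases h2 with h2 | h2
    · exact hj0 h2
    · exact h2 hk0
  have := sc_chain a b ι hia hib f hf (j • a + k • (a + b)) u1 u2
  rwa [e2] at this

include hia hib hf in
lemma conn [Finite A] (hker : ∀ y : A, ι y = 0 → ∃ k : ℕ, y = k • (a + b))
    (hd : a + b ≠ 0) :
    ∀ v : A × Fin 4, f.SameCycle (((M - 1) • a, 0) : A × Fin 4) v := by
  classical
  set T : A × Fin 4 := (((M - 1) • a, 0) : A × Fin 4) with hT
  set r : ℕ := addOrderOf (a + b) with hrdef
  have hrpos : 0 < r := addOrderOf_pos (a + b)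
  have hr2 : 2 ≤ r := by
    by_contra h
    have h1 : r = 1 := by omega
    rw [hrdef] at h1
    exact hd (AddMonoid.addOrderOf_eq_one_iff.mp h1)
  have hrd : r • (a + b) = 0 := addOrderOf_nsmul_eq_zero (a + b)
  have hdm : ∀ k : ℕ, k • (a + b) = (k % r) • (a + b) := fun k =>
    (mod_addOrderOf_nsmul (a + b) k).symm
  have hne : ∀ k : ℕ, 0 < k → k < r → k • (a + b) ≠ 0 := by
    intro k h1 h2 h0
    have : r ∣ k := addOrderOf_dvd_of_nsmul_eq_zero h0
    have := Nat.le_of_dvd h1 this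
    omega
  have hM1 : 1 ≤ M := Nat.one_le_iff_ne_zero.mpr (NeZero.ne M)
  -- base coset j = M - 1, i = 0 component
  have base0 : ∀ k : ℕ, k < r → f.SameCycle T ((M - 1) • a + k • (a + b), 0) := by
    intro k
    induction k with
    | zero =>
        intro _
        have e : (M - 1) • a + 0 • (a + b) = (M - 1) • a := by simp
        rw [e]
    | succ k ih =>
        intro hk
        have h1 : k < r := by omega
        refine (ih h1).trans ?_
        apply chain_up a b ι hia hib f hf (M - 1) k (by omega)
        · left; omega
        · right; exact hne (k + 1) (by omega) hk
  have base0' : ∀ k : ℕ, f.SameCycle T ((M - 1) • a + k • (a + b), 0) := by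
    intro k
    rw [hdm k]
    exact base0 (k % r) (Nat.mod_lt _ hrpos)
  -- base coset, i = 3 component
  have base3' : ∀ k : ℕ, f.SameCycle T ((M - 1) • a + k • (a + b), 3) := by
    intro k
    by_cases hm : marked ι a ((M - 1) • a + k • (a + b))
    · -- marked: k • (a+b) = 0 and M - 1 ≠ 0
      obtain ⟨hj0, hkd⟩ := (markedIff a b ι hia hib (M - 1) k (by omega)).mp hm
      set z : A := M • a + (r - 1) • (a + b) with hz
      have hzy : z + b = (M - 1) • a + k • (a + b) := by
        rw [hz, hkd, add_zero]
        have hM' : M = (M - 1) + 1 := by omega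
        have hr' : r = (r - 1) + 1 := by omega
        rw [hM', succ_nsmul]
        have : ((M-1+1-1):ℕ) = M - 1 := by omega
        rw [this]
        calc (M - 1) • a + a + (r - 1) • (a + b) + b
            = (M - 1) • a + ((r - 1) • (a + b) + (a + b)) := by abel
          _ = (M - 1) • a + ((r - 1 + 1) • (a + b)) := by rw [succ_nsmul]
          _ = (M - 1) • a := by rw [← hr', hrd, add_zero]
      have hiz : ι z = 0 := by
        rw [hz, iota_form a b ι hia hib, ZMod.natCast_self]
      have huz : ¬ marked ι a z := unmarked_of_iota_zero a ι z hiz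
      have hw : ((M - 1) • a + (r - 1) • (a + b)) + a = z := by
        rw [hz]
        have hM' : M = (M - 1) + 1 := by omega
        rw [hM', succ_nsmul]
        have : ((M-1+1-1):ℕ) = M - 1 := by omega
        rw [this]
        abel
      -- T ~ (w,0) ~ (z,2) ~ (z,1) ~ (z+b,3) = target
      have s1 := sc1 a b ι hia f hf ((M - 1) • a + (r - 1) • (a + b))
      rw [hw] at s1
      have s3 := sc3 a b ι f hf z huz
      have s2 := sc2 a b ι hib f hf z
      rw [hzy] at s2
      exact (((base0' (r - 1)).trans s1).trans s3.symm).trans s2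
    · exact (base0' k).trans (sc4 a b ι f hf _ hm).symm
  -- step: from coset j+1 down to coset j
  have stepP : ∀ j : ℕ, j + 1 < M →
      (∀ k : ℕ, f.SameCycle T ((j + 1) • a + k • (a + b), 0) ∧
        f.SameCycle T ((j + 1) • a + k • (a + b), 3)) →
      (∀ k : ℕ, f.SameCycle T ((j • a : A) + k • (a + b), 0) ∧
        f.SameCycle T ((j • a : A) + k • (a + b), 3)) := by
    intro j hjM IH
    have hj : j < M := by omega
    have hm0 : marked ι a ((j + 1) • a) := by
      have := (markedIff a b ι hia hib (j + 1) 0 hjM).mpr ⟨by omega, by simp⟩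
      simpa using this
    have IH0 : f.SameCycle T ((j + 1) • a, 0) := by
      have := (IH 0).1; simpa using this
    have IH3 : f.SameCycle T ((j + 1) • a, 3) := by
      have := (IH 0).2; simpa using this
    -- S1 : k = 1 case, i = 0 and i = 3
    have ew : (j + 1) • a + b = j • a + 1 • (a + b) := by
      rw [succ_nsmul, one_nsmul]; abel
    have uw : ¬ marked ι a (j • a + 1 • (a + b)) := by
      intro hm
      have := ((markedIff a b ι hia hib j 1 hj).mp hm).2
      rw [one_nsmul] at this
      exact hd this
    have S13 : f.SameCycle T (j • a + 1 • (a + b), 3) := by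
      have s2 := sc2 a b ι hib f hf ((j + 1) • a)
      rw [ew] at s2
      exact (IH0.trans (sc6 a b ι f hf _ hm0)).trans s2
    have S1 : f.SameCycle T (j • a + 1 • (a + b), 0) :=
      S13.trans (sc4 a b ι f hf _ uw)
    -- chain upward within coset j for 1 ≤ k < r
    have Sk : ∀ k : ℕ, 1 ≤ k → k < r → f.SameCycle T (j • a + k • (a + b), 0) := by
      intro k
      induction k with
      | zero => omega
      | succ k ih =>
          intro _ hk
          rcases Nat.eq_or_lt_of_le (show 1 ≤ k + 1 by omega) with h1 | h1
          · rw [← h1]; exact S1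
          · have hk1 : 1 ≤ k := by omega
            refine (ih hk1 (by omega)).trans ?_
            apply chain_up a b ι hia hib f hf j k hj
            · right; exact hne k (by omega) (by omega)
            · right; exact hne (k + 1) (by omega) hk
    -- k ≡ 0 case, i = 0
    have S0 : f.SameCycle T ((j • a : A), 0) := by
      have s1 := sc1 a b ι hia f hf (j • a : A)
      have e : (j • a : A) + a = (j + 1) • a := (succ_nsmul a j).symm
      rw [e] at s1
      exact (IH3.trans (sc5 a b ι f hf _ hm0).symm).trans s1.symm
    -- i = 0 for all k < r
    have Sall0 : ∀ k : ℕ, k < r → f.SameCycle T (j • a + k • (a + b), 0) := by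
      intro k hk
      rcases Nat.eq_zero_or_pos k with h | h
      · subst h; simpa using S0
      · exact Sk k h hk
    -- i = 3 for all k < r
    have Sall3 : ∀ k : ℕ, k < r → f.SameCycle T (j • a + k • (a + b), 3) := by
      intro k hk
      by_cases hm : marked ι a (j • a + k • (a + b))
      · obtain ⟨hj0, hkd⟩ := (markedIff a b ι hia hib j k hj).mp hm
        set z : A := (j + 1) • a + (r - 1) • (a + b) with hz
        have hzy : z + b = j • a + k • (a + b) := by
          rw [hz, hkd, add_zero, succ_nsmul]
          have hr' : r = (r - 1) + 1 := by omega
          calc j • a + a + (r - 1) • (a + b) + b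
              = j • a + ((r - 1) • (a + b) + (a + b)) := by abel
            _ = j • a + ((r - 1 + 1) • (a + b)) := by rw [succ_nsmul]
            _ = j • a := by rw [← hr', hrd, add_zero]
        have huz : ¬ marked ι a z := by
          intro hmz
          have := ((markedIff a b ι hia hib (j + 1) (r - 1) hjM).mp hmz).2
          exact hne (r - 1) (by omega) (by omega) this
        have hw : (j • a + (r - 1) • (a + b)) + a = z := by
          rw [hz, succ_nsmul]; abel
        have s1 := sc1 a b ι hia f hf (j • a + (r - 1) • (a + b))
        rw [hw] at s1
        have s3 := sc3 a b ι f hf z huz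
        have s2 := sc2 a b ι hib f hf z
        rw [hzy] at s2
        exact (((Sk (r - 1) (by omega) (by omega)).trans s1).trans s3.symm).trans s2
      · exact (Sall0 k hk).trans (sc4 a b ι f hf _ hm).symm
    intro k
    constructor
    · rw [hdm k]; exact Sall0 (k % r) (Nat.mod_lt _ hrpos)
    · rw [hdm k]; exact Sall3 (k % r) (Nat.mod_lt _ hrpos)
  -- downward induction over cosets
  have allj : ∀ t : ℕ, t < M → ∀ k : ℕ,
      f.SameCycle T (((M - 1 - t) • a : A) + k • (a + b), 0) ∧
      f.SameCycle T (((M - 1 - t) • a : A) + k • (a + b), 3) := by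
    intro t
    induction t with
    | zero =>
        intro _ k
        simp only [Nat.sub_zero]
        exact ⟨base0' k, base3' k⟩
    | succ t ih =>
        intro ht
        have hIH := ih (by omega)
        have he : M - 1 - t = (M - 1 - (t + 1)) + 1 := by omega
        rw [he] at hIH
        exact stepP (M - 1 - (t + 1)) (by omega) hIH
  have allcov : ∀ (j : ℕ), j < M → ∀ k : ℕ,
      f.SameCycle T ((j • a : A) + k • (a + b), 0) ∧
      f.SameCycle T ((j • a : A) + k • (a + b), 3) := by
    intro j hj
    have : j = M - 1 - (M - 1 - j) := by omega
    rw [this]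
    exact allj (M - 1 - j) (by omega)
  -- coverage of i = 0 and i = 3 for every y
  have cov0 : ∀ y : A, f.SameCycle T (y, 0) := by
    intro y
    obtain ⟨k, hk⟩ := decomp a b ι hia hker y
    rw [hk]
    exact (allcov (ι y).val (ZMod.val_lt _) k).1
  have cov3 : ∀ y : A, f.SameCycle T (y, 3) := by
    intro y
    obtain ⟨k, hk⟩ := decomp a b ι hia hker y
    rw [hk]
    exact (allcov (ι y).val (ZMod.val_lt _) k).2
  have cov2 : ∀ y : A, f.SameCycle T (y, 2) := by
    intro y
    have s1 := sc1 a b ι hia f hf (y - a)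
    rw [sub_add_cancel] at s1
    exact (cov0 (y - a)).trans s1
  have cov1 : ∀ y : A, f.SameCycle T (y, 1) := by
    intro y
    by_cases hm : marked ι a y
    · exact (cov0 y).trans (sc6 a b ι f hf y hm)
    · exact (cov2 y).trans (sc3 a b ι f hf y hm).symm
  intro v
  obtain ⟨y, i⟩ := v
  fin_cases i
  · exact cov0 y
  · exact cov1 y
  · exact cov2 y
  · exact cov3 y

section Adj

lemma squareAdj (y : A) (i j : Fin 4) (h : j = i + 1 ∨ i = j + 1) (hne : i ≠ j) :
    (truncSquareGraph a b).Adj (y, i) (y, j) := by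
  rw [truncSquareGraph, SimpleGraph.fromRel_adj]
  refine ⟨by simp [hne], ?_⟩
  rcases h with h | h
  · exact Or.inl (Or.inl ⟨y, i, rfl, by rw [h]⟩)
  · exact Or.inr (Or.inl ⟨y, j, rfl, by rw [h]⟩)

lemma horizAdj (y : A) : (truncSquareGraph a b).Adj (y, 0) (y + a, 2) := by
  rw [truncSquareGraph, SimpleGraph.fromRel_adj]
  exact ⟨by simp, Or.inl (Or.inr (Or.inl ⟨y, rfl, rfl⟩))⟩

lemma vertAdj (y : A) : (truncSquareGraph a b).Adj (y, 1) (y + b, 3) := by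
  rw [truncSquareGraph, SimpleGraph.fromRel_adj]
  exact ⟨by simp, Or.inl (Or.inr (Or.inr ⟨y, rfl, rfl⟩))⟩

lemma adj_next (v : A × Fin 4) :
    (truncSquareGraph a b).Adj v (NEXT a b ι v) := by
  obtain ⟨y, i⟩ := v
  fin_cases i
  · show (truncSquareGraph a b).Adj (y, 0) (NEXT a b ι (y, 0))
    rw [NEXT_zero]
    split_ifs with h1 h2
    · exact horizAdj a b y
    · exact squareAdj a b y 0 1 (Or.inl rfl) (by decide)
    · exact squareAdj a b y 0 3 (Or.inr rfl) (by decide)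
  · show (truncSquareGraph a b).Adj (y, 1) (NEXT a b ι (y, 1))
    rw [NEXT_one]
    split_ifs with h1 h2
    · exact vertAdj a b y
    · exact squareAdj a b y 1 0 (Or.inr rfl) (by decide)
    · exact squareAdj a b y 1 2 (Or.inl rfl) (by decide)
  · show (truncSquareGraph a b).Adj (y, 2) (NEXT a b ι (y, 2))
    rw [NEXT_two]
    split_ifs with h1 h2
    · exact squareAdj a b y 2 3 (Or.inl rfl) (by decide)
    · exact squareAdj a b y 2 1 (Or.inr rfl) (by decide)
    · have := (horizAdj a b (y - a)).symm
      rwa [sub_add_cancel] at this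
  · show (truncSquareGraph a b).Adj (y, 3) (NEXT a b ι (y, 3))
    rw [NEXT_three]
    split_ifs with h1 h2
    · exact squareAdj a b y 3 2 (Or.inr rfl) (by decide)
    · exact squareAdj a b y 3 0 (Or.inl rfl) (by decide)
    · have := (vertAdj a b (y - b)).symm
      rwa [sub_add_cancel] at this

end Adj

open SimpleGraph Function

section PermHam

variable {V : Type*} [Fintype V] [DecidableEq V] (G : SimpleGraph V) (f : Equiv.Perm V)
  (hadj : ∀ v, G.Adj v (f v)) (v₀ : V)

private noncomputable def walkIter : (k : ℕ) → G.Walk v₀ ((⇑f)^[k] v₀)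
  | 0 => Walk.nil
  | (k+1) => (walkIter k).concat (by rw [Function.iterate_succ_apply']; exact hadj _)

variable {G f v₀}

private lemma walkIter_support (hadj : ∀ v, G.Adj v (f v)) (k : ℕ) :
    (walkIter G f hadj v₀ k).support = (List.range (k+1)).map (fun i => (⇑f)^[i] v₀) := by
  induction k with
  | zero =>
      show [v₀] = _
      rw [List.range_succ]
      simp
  | succ k ih =>
      rw [walkIter, Walk.support_concat, ih, List.range_succ (n := k+1)]
      simp [pow_succ, Equiv.Perm.mul_apply]

private lemma walkIter_edges (hadj : ∀ v, G.Adj v (f v)) (k : ℕ) :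
    (walkIter G f hadj v₀ k).edges
      = (List.range k).map (fun i => s((⇑f)^[i] v₀, (⇑f)^[i+1] v₀)) := by
  induction k with
  | zero => simp [walkIter]
  | succ k ih =>
      rw [walkIter, Walk.edges_concat, ih, List.range_succ (n := k)]
      simp [Function.iterate_succ_apply']

private lemma walkIter_length (hadj : ∀ v, G.Adj v (f v)) (k : ℕ) :
    (walkIter G f hadj v₀ k).length = k := by
  induction k with
  | zero => simp [walkIter]
  | succ k ih => rw [walkIter, Walk.length_concat, ih]

theorem hamiltonian_of_perm (hadj : ∀ v, G.Adj v (f v))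
    (hcard : 3 ≤ Fintype.card V) (hsc : ∀ v w : V, f.SameCycle v w) : G.Hamiltonian := by
  classical
  have hne : Nonempty V := Fintype.card_pos_iff.mp (by omega)
  obtain ⟨v₀⟩ := hne
  set g : ℕ → V := fun i => (⇑f)^[i] v₀ with hg
  -- v₀ is a periodic point
  have hper : v₀ ∈ periodicPts ⇑f := by
    refine ⟨orderOf f, orderOf_pos f, ?_⟩
    show (⇑f)^[orderOf f] v₀ = v₀
    rw [← Equiv.Perm.coe_pow, pow_orderOf_eq_one]; rfl
  set p : ℕ := minimalPeriod ⇑f v₀ with hp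
  have hppos : 0 < p := minimalPeriod_pos_of_mem_periodicPts hper
  have hinj : Set.InjOn (fun n => (⇑f)^[n] v₀) (Set.Iio p) :=
    iterate_injOn_Iio_minimalPeriod
  have hsurj : ∀ w : V, ∃ i < p, g i = w := by
    intro w
    obtain ⟨i, -, hi⟩ := (hsc v₀ w).exists_pow_eq'
    refine ⟨i % p, Nat.mod_lt _ hppos, ?_⟩
    rw [hg]
    show (⇑f)^[i % p] v₀ = w
    rw [iterate_mod_minimalPeriod_eq, ← hi, Equiv.Perm.coe_pow]
  -- p = card V
  have hcardp : p = Fintype.card V := by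
    have h1 : (Finset.range p).image g = Finset.univ := by
      apply Finset.eq_univ_of_forall
      intro w
      obtain ⟨i, hi, hiw⟩ := hsurj w
      exact Finset.mem_image.mpr ⟨i, Finset.mem_range.mpr hi, hiw⟩
    have h2 : ((Finset.range p).image g).card = p := by
      rw [Finset.card_image_of_injOn, Finset.card_range]
      intro i hi j hj hij
      exact hinj (Finset.mem_range.mp hi) (Finset.mem_range.mp hj) hij
    rw [h1, Finset.card_univ] at h2
    omega
  have hpv : (⇑f)^[p] v₀ = v₀ := iterate_minimalPeriod
  have hgmod : ∀ i, g (i % p) = g i := fun i => iterate_mod_minimalPeriod_eq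
  have hginj : ∀ i < p, ∀ j < p, g i = g j → i = j := fun i hi j hj h => hinj hi hj h
  refine ⟨v₀, (walkIter G f hadj v₀ p).copy rfl hpv, ⟨⟨⟨?_⟩, ?_⟩, ?_⟩, ?_⟩
  · -- edges nodup
    rw [Walk.edges_copy, walkIter_edges]
    refine List.Nodup.map_on ?_ List.nodup_range
    intro i hi j hj hij
    rw [List.mem_range] at hi hj
    rw [Sym2.eq_iff] at hij
    have e1 : ∀ i < p, ∀ j < p, g i = g j → i = j := hginj
    have key : ∀ k, g (k+1) = g ((k+1) % p) := fun k => (hgmod (k+1)).symm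
    rcases hij with ⟨h1, h2⟩ | ⟨h1, h2⟩
    · exact e1 i hi j hj h1
    · -- crossed: g i = g (j+1), g (i+1) = g j
      have hij1 : i = (j+1) % p := by
        apply e1 i hi _ (Nat.mod_lt _ hppos)
        rw [hgmod]; exact h1
      have hji1 : j = (i+1) % p := by
        apply e1 j hj _ (Nat.mod_lt _ hppos)
        rw [hgmod]; exact h2.symm
      -- derives 2 ∣ ... contradiction with p ≥ 3
      have hp3 : 3 ≤ p := by omega
      rcases Nat.lt_or_ge (j+1) p with h | h
      · rw [Nat.mod_eq_of_lt h] at hij1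
        rcases Nat.lt_or_ge (i+1) p with h' | h'
        · rw [Nat.mod_eq_of_lt h'] at hji1; omega
        · have hip : i + 1 = p := by omega
          rw [hip, Nat.mod_self] at hji1; omega
      · have hjp : j + 1 = p := by omega
        rw [hjp, Nat.mod_self] at hij1
        subst hij1
        rw [Nat.mod_eq_of_lt (by omega : 0 + 1 < p)] at hji1
        omega
  · -- not nil
    intro hnil
    have := walkIter_length (G := G) (f := f) (v₀ := v₀) hadj p
    have h0 : ((walkIter G f hadj v₀ p).copy rfl hpv).length = 0 := by
      rw [hnil]; rfl
    rw [Walk.length_copy] at h0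
    omega
  · -- support tail nodup
    rw [Walk.support_copy, walkIter_support]
    have : (List.range (p+1)).map g = g 0 :: (List.range p).map (fun i => g (i+1)) := by
      rw [List.range_succ_eq_map]
      simp [Function.comp]
    rw [this]
    show ((List.range p).map (fun i => g (i+1))).Nodup
    refine List.Nodup.map_on ?_ List.nodup_range
    intro i hi j hj hij
    rw [List.mem_range] at hi hj
    have h1 : (i+1) % p = (j+1) % p := by
      apply hginj _ (Nat.mod_lt _ hppos) _ (Nat.mod_lt _ hppos)
      rw [hgmod, hgmod]; exact hij
    rcases Nat.lt_or_ge (i+1) p with h | h <;> rcases Nat.lt_or_ge (j+1) p with h' | h'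
    · rw [Nat.mod_eq_of_lt h, Nat.mod_eq_of_lt h'] at h1; omega
    · have : j + 1 = p := by omega
      rw [Nat.mod_eq_of_lt h, this, Nat.mod_self] at h1; omega
    · have : i + 1 = p := by omega
      rw [this, Nat.mod_self, Nat.mod_eq_of_lt h'] at h1; omega
    · omega
  · -- all vertices in support
    intro v
    rw [Walk.support_copy, walkIter_support]
    obtain ⟨i, hi, hiv⟩ := hsurj v
    rw [List.mem_map]
    exact ⟨i, List.mem_range.mpr (by omega), hiv⟩

end PermHam

theorem abstract_main {A : Type*} [AddCommGroup A] [Finite A] (a b : A) (M : ℕ) [NeZero M]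
    (ι : A →+ ZMod M) (hia : ι a = 1) (hib : ι b = -1)
    (hker : ∀ y : A, ι y = 0 → ∃ k : ℕ, y = k • (a + b)) (hd : a + b ≠ 0) :
    (truncSquareGraph a b).Hamiltonian := by
  classical
  haveI : Fintype A := Fintype.ofFinite A
  haveI : DecidableEq (A × Fin 4) := Classical.decEq _
  have hinj : Function.Injective (NEXT a b ι) := by
    intro u v h
    have h2 := congrArg (PREV a b ι) h
    rwa [prev_next a b ι hia hib, prev_next a b ι hia hib] at h2
  have hbij := (Finite.injective_iff_bijective).mp hinj
  let f : Equiv.Perm (A × Fin 4) := Equiv.ofBijective _ hbij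
  have hf : ∀ v, f v = NEXT a b ι v := fun v => rfl
  have hsc := conn a b ι hia hib f hf hker hd
  apply hamiltonian_of_perm (G := truncSquareGraph a b) (f := f)
  · intro v; rw [hf]; exact adj_next a b ι v
  · have hle : Fintype.card (Fin 4) ≤ Fintype.card (A × Fin 4) :=
      Fintype.card_le_of_injective (fun i => ((0 : A), i))
        (fun i j h => by simpa using congrArg Prod.snd h)
    simpa using le_trans (by norm_num) hle
  · intro v w
    exact (hsc v).symm.trans (hsc w)

/-- Every truncated-square torus graph (type `{4,8,8}`) is Hamiltonian. -/
theorem truncSquareTorusGraph_hamiltonian (L : AddSubgroup (ℤ × ℤ)) (hL : Admissible L) :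
    (truncSquareTorusGraph L).Hamiltonian := by
  classical
  obtain ⟨hfin, hsmall⟩ := hL
  haveI : Finite ((ℤ × ℤ) ⧸ L) := hfin
  set Q := (ℤ × ℤ) ⧸ L with hQ
  let π : (ℤ × ℤ) →+ Q := QuotientAddGroup.mk' L
  let aa : Q := QuotientAddGroup.mk e₁
  let bb : Q := QuotientAddGroup.mk e₂
  have hπa : π e₁ = aa := rfl
  have hπb : π e₂ = bb := rfl
  -- the difference homomorphism
  let ψ : (ℤ × ℤ) →+ ℤ := (AddMonoidHom.fst ℤ ℤ) - (AddMonoidHom.snd ℤ ℤ)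
  have hψ : ∀ p : ℤ × ℤ, ψ p = p.1 - p.2 := fun p => rfl
  obtain ⟨g, hg⟩ := Int.subgroup_cyclic (AddSubgroup.map ψ L)
  have hgz : AddSubgroup.map ψ L = AddSubgroup.zmultiples g := by
    rw [hg, AddSubgroup.zmultiples_eq_closure]
  -- g is nonzero
  have hg0 : g ≠ 0 := by
    intro h0
    have hnpos : 0 < addOrderOf aa := addOrderOf_pos aa
    have hmem : (addOrderOf aa) • e₁ ∈ L := by
      have : π ((addOrderOf aa) • e₁) = 0 := by
        rw [map_nsmul, hπa, addOrderOf_nsmul_eq_zero]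
      exact (QuotientAddGroup.eq_zero_iff _).mp this
    have : ψ ((addOrderOf aa) • e₁) ∈ AddSubgroup.map ψ L :=
      AddSubgroup.mem_map_of_mem _ hmem
    rw [hgz, h0] at this
    have hz : ψ ((addOrderOf aa) • e₁) = (addOrderOf aa : ℤ) := by
      rw [map_nsmul, hψ]
      show (addOrderOf aa) • ((1:ℤ) - 0) = _
      simp
    rw [hz] at this
    obtain ⟨k, hk⟩ := this
    simp at hk
    omega
  set M : ℕ := g.natAbs with hM
  haveI : NeZero M := ⟨Int.natAbs_ne_zero.mpr hg0⟩
  -- the index homomorphism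
  have hLker : ∀ l ∈ L, (Int.castAddHom (ZMod M)).comp ψ l = 0 := by
    intro l hl
    show ((ψ l : ℤ) : ZMod M) = 0
    rw [ZMod.intCast_zmod_eq_zero_iff_dvd]
    have hmem : ψ l ∈ AddSubgroup.map ψ L := AddSubgroup.mem_map_of_mem _ hl
    rw [hgz] at hmem
    have : g ∣ ψ l := Int.mem_zmultiples_iff.mp hmem
    rwa [hM, Int.natAbs_dvd]
  let ι : Q →+ ZMod M := QuotientAddGroup.lift L ((Int.castAddHom (ZMod M)).comp ψ) hLker
  have hιmk : ∀ p : ℤ × ℤ, ι (QuotientAddGroup.mk p) = ((p.1 - p.2 : ℤ) : ZMod M) := by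
    intro p; rfl
  have hia : ι aa = 1 := by
    rw [show aa = QuotientAddGroup.mk e₁ from rfl, hιmk]
    norm_num [e₁]
  have hib : ι bb = -1 := by
    rw [show bb = QuotientAddGroup.mk e₂ from rfl, hιmk]
    norm_num [e₂]
  -- the diagonal is nonzero
  have habd : aa + bb = QuotientAddGroup.mk ((1,1) : ℤ × ℤ) := by
    show QuotientAddGroup.mk e₁ + QuotientAddGroup.mk e₂ = _
    rw [← QuotientAddGroup.mk_add]
    norm_num [e₁, e₂, Prod.ext_iff]
  have hd : aa + bb ≠ 0 := by
    rw [habd]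
    intro h
    have hmem : ((1,1) : ℤ × ℤ) ∈ L := (QuotientAddGroup.eq_zero_iff _).mp h
    have := hsmall (1,1) hmem (by simp [Prod.ext_iff])
    norm_num at this
  -- kernel property
  have hker : ∀ y : Q, ι y = 0 → ∃ k : ℕ, y = k • (aa + bb) := by
    intro y hy
    obtain ⟨⟨u, v⟩, rfl⟩ := QuotientAddGroup.mk_surjective y
    rw [hιmk, ZMod.intCast_zmod_eq_zero_iff_dvd, hM, Int.natAbs_dvd] at hy
    have hmem : (u - v : ℤ) ∈ AddSubgroup.map ψ L := by
      rw [hgz]; exact Int.mem_zmultiples_iff.mpr hy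
    obtain ⟨l, hl, hlv⟩ := hmem
    rw [hψ] at hlv
    -- (u,v) - l is on the diagonal
    have hco : ((u,v) : ℤ × ℤ) - l = (v - l.2) • ((1,1) : ℤ × ℤ) := by
      have h1 : l.1 - l.2 = u - v := hlv
      have h2 : ((u,v) : ℤ × ℤ) - l = (u - l.1, v - l.2) := rfl
      rw [h2]
      have h3 : u - l.1 = v - l.2 := by omega
      rw [h3]
      ext <;> simp
    have hyeq : (QuotientAddGroup.mk ((u,v) : ℤ × ℤ) : Q)
        = (v - l.2) • (aa + bb) := by
      have hml : (QuotientAddGroup.mk l : Q) = 0 := (QuotientAddGroup.eq_zero_iff _).mpr hl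
      have : (QuotientAddGroup.mk ((u,v) : ℤ × ℤ) : Q)
          = QuotientAddGroup.mk (((u,v) : ℤ × ℤ) - l) := by
        rw [QuotientAddGroup.mk_sub, hml, sub_zero]
      rw [this, hco, habd]
      show π ((v - l.2) • ((1,1) : ℤ × ℤ)) = _
      rw [map_zsmul]
      rfl
    -- convert integer smul to natural smul
    set t : ℤ := v - l.2
    set r : ℕ := addOrderOf (aa + bb) with hr
    have hrpos : 0 < r := addOrderOf_pos (aa + bb)
    have hmod : (t % (r : ℤ)) • (aa + bb) = t • (aa + bb) := mod_addOrderOf_zsmul (aa + bb) t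
    have hnonneg : 0 ≤ t % (r : ℤ) := Int.emod_nonneg t (by exact_mod_cast hrpos.ne')
    refine ⟨(t % (r : ℤ)).toNat, ?_⟩
    have hcast : (((t % (r : ℤ)).toNat : ℤ)) • (aa + bb) = (t % (r : ℤ)) • (aa + bb) := by
      rw [Int.toNat_of_nonneg hnonneg]
    rw [hyeq, ← hmod, ← hcast, natCast_zsmul]
  -- conclude
  show (truncSquareGraph aa bb).Hamiltonian
  exact abstract_main aa bb M ι hia hib hker hd
end Conn
end Main
end
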